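/- arXiv:2303.04629 — 5 statements merged into one kernel-verified Lean document; each statement's English description precedes it below -/
import Mathlib

section
/- Strong maximum principle on a network: assume (H1) and let Γ be connected. Let g : Γ → ℝ be piecewise continuous (g_α ∈ C([0,ℓ_α]) for every α). If v ∈ C²(Γ) satisfies −μ_α ∂²v + g ∂v = 0 on Γ_α∖𝒱 for every α ∈ 𝒜 and the Kirchhoff condition Σ_{α∈𝒜_i} γ_{iα} μ_α ∂_α v(ν_i) = 0 at every vertex ν_i, then v is constant on Γ; conversely every constant function satisfies this problem. -/
open scoped Classical
open Set MeasureTheory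

noncomputable section

/-- A finite network `Γ`: finitely many edges indexed by `ι` and vertices indexed by `I`.
Edge `α` has length `ℓ α > 0`; it is parametrized (isometrically) by `[0, ℓ α]`, joining the
vertex `e0 α` (at parameter `0`) to the vertex `e1 α` (at parameter `ℓ α`).
A function on the network is represented edgewise as `v : ι → ℝ → ℝ`,
`v α` being `v_α = v|_{Γ_α} ∘ π_α`, read through the parametrization. -/
structure Network where
  (ι : Type)
  (I : Type)
  [fintE : Fintype ι]
  [fintV : Fintype I]
  (ℓ : ι → ℝ)
  (ℓ_pos : ∀ α, 0 < ℓ α)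
  (e0 : ι → I)
  (e1 : ι → I)
  (no_loop : ∀ α, e0 α ≠ e1 α)

attribute [instance] Network.fintE Network.fintV

namespace Network

variable (Γ : Network)

/-- the parameter interval `[0, ℓ_α]` of the edge `α` -/
def edge (α : Γ.ι) : Set ℝ := Icc 0 (Γ.ℓ α)

/-- `α` is an edge adjacent to the vertex `i` -/
def incident (α : Γ.ι) (i : Γ.I) : Prop := Γ.e0 α = i ∨ Γ.e1 α = i

/-- the set `𝒜_i` of edges adjacent to the vertex `i` -/
def adj (i : Γ.I) : Finset Γ.ι := Finset.univ.filter fun α => Γ.incident α i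

/-- the network is connected -/
def Conn : Prop :=
  ∀ i j : Γ.I, Relation.ReflTransGen (fun i j => ∃ α, Γ.incident α i ∧ Γ.incident α j) i j

/-- first derivative `∂ v_α` along the edge (one-sided at the endpoints) -/
def d1 (v : Γ.ι → ℝ → ℝ) (α : Γ.ι) : ℝ → ℝ := derivWithin (v α) (Γ.edge α)

/-- second derivative `∂² v_α` along the edge -/
def d2 (v : Γ.ι → ℝ → ℝ) (α : Γ.ι) : ℝ → ℝ := derivWithin (Γ.d1 v α) (Γ.edge α)

/-- the value of `v` at the vertex `i` seen from the edge `α` -/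
def valAt (v : Γ.ι → ℝ → ℝ) (α : Γ.ι) (i : Γ.I) : ℝ :=
  if Γ.e0 α = i then v α 0 else v α (Γ.ℓ α)

/-- the outward derivative `∂_α v (ν_i)` at the vertex `i` along the edge `α`:
`∂_α v(ν_i) = lim_{h→0⁺} (v_α(0) - v_α(h))/h` if `ν_i = π_α(0)` and
`∂_α v(ν_i) = lim_{h→0⁺} (v_α(ℓ_α) - v_α(ℓ_α - h))/h` if `ν_i = π_α(ℓ_α)`. -/
def outDeriv (v : Γ.ι → ℝ → ℝ) (α : Γ.ι) (i : Γ.I) : ℝ :=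
  if Γ.e0 α = i then -(Γ.d1 v α 0) else Γ.d1 v α (Γ.ℓ α)

/-- `v` is continuous at the vertices (values from adjacent edges agree) -/
def VertexCont (v : Γ.ι → ℝ → ℝ) : Prop :=
  ∀ i : Γ.I, ∀ α ∈ Γ.adj i, ∀ β ∈ Γ.adj i, Γ.valAt v α i = Γ.valAt v β i

/-- `v ∈ C^m(Γ)` -/
def Cm (m : ℕ) (v : Γ.ι → ℝ → ℝ) : Prop :=
  (∀ α, ContDiffOn ℝ m (v α) (Γ.edge α)) ∧ Γ.VertexCont v

/-- sup norm of a function on the edge `α` -/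
def esup (g : ℝ → ℝ) (α : Γ.ι) : ℝ := sSup ((fun y => |g y|) '' Γ.edge α)

/-- the `C²(Γ)` norm `‖v‖ = Σ_α Σ_{k ≤ 2} ‖∂^k v_α‖_∞` -/
def C2norm (v : Γ.ι → ℝ → ℝ) : ℝ :=
  ∑ α, (Γ.esup (v α) α + Γ.esup (Γ.d1 v α) α + Γ.esup (Γ.d2 v α) α)

/-- the mean `⟨v⟩ = ∫_Γ v dx` -/
def avg (v : Γ.ι → ℝ → ℝ) : ℝ := ∑ α, ∫ y in (0:ℝ)..(Γ.ℓ α), v α y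

end Network

/-- the `σ`-Hölder seminorm `[g]_{σ,s}` of `g` on the set `s` -/
def holderSemi (σ : ℝ) (g : ℝ → ℝ) (s : Set ℝ) : ℝ :=
  sSup {c | ∃ y ∈ s, ∃ z ∈ s, y ≠ z ∧ c = |g y - g z| / |y - z| ^ σ}

namespace Network

variable (Γ : Network)

/-- the `C^{2,θ}(Γ)` norm -/
def C2θnorm (θ : ℝ) (v : Γ.ι → ℝ → ℝ) : ℝ :=
  Γ.C2norm v + ⨆ α, holderSemi θ (Γ.d2 v α) (Γ.edge α)

/-- classical solution of the discounted HJ problem on `Γ` with Hamiltonian `H` and discount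
`lam`:  `-μ_α ∂²v + H_α(x, ∂v) + lam v = 0` inside every edge, together with the Kirchhoff
transmission condition `Σ_{α ∈ 𝒜_i} γ_{iα} μ_α ∂_α v(ν_i) = 0` at every vertex
(continuity at the vertices is part of `Γ.Cm 2 v`). -/
def IsDiscountedSol (μ : Γ.ι → ℝ) (γ : Γ.I → Γ.ι → ℝ) (H : Γ.ι → ℝ → ℝ → ℝ)
    (lam : ℝ) (v : Γ.ι → ℝ → ℝ) : Prop :=
  Γ.Cm 2 v ∧
  (∀ α, ∀ y ∈ Ioo 0 (Γ.ℓ α),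
    -(μ α) * Γ.d2 v α y + H α y (Γ.d1 v α y) + lam * v α y = 0) ∧
  (∀ i : Γ.I, ∑ α ∈ Γ.adj i, γ i α * μ α * Γ.outDeriv v α i = 0)

/-- classical solution of the ergodic HJ problem on `Γ` with Hamiltonian `H`:
`-μ_α ∂²v + H_α(x, ∂v) + ρ = 0` inside every edge, Kirchhoff condition at every vertex,
and the normalization `⟨v⟩ = 0`. -/
def IsErgodicSol (μ : Γ.ι → ℝ) (γ : Γ.I → Γ.ι → ℝ) (H : Γ.ι → ℝ → ℝ → ℝ)
    (v : Γ.ι → ℝ → ℝ) (ρ : ℝ) : Prop :=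
  Γ.Cm 2 v ∧
  (∀ α, ∀ y ∈ Ioo 0 (Γ.ℓ α),
    -(μ α) * Γ.d2 v α y + H α y (Γ.d1 v α y) + ρ = 0) ∧
  (∀ i : Γ.I, ∑ α ∈ Γ.adj i, γ i α * μ α * Γ.outDeriv v α i = 0) ∧
  Γ.avg v = 0

/-- assumption (H1): `μ_α > 0`, `γ_{iα} > 0` and `Σ_{α ∈ 𝒜_i} γ_{iα} μ_α = 1` -/
def H1cond (μ : Γ.ι → ℝ) (γ : Γ.I → Γ.ι → ℝ) : Prop :=
  (∀ α, 0 < μ α) ∧ (∀ i : Γ.I, ∀ α ∈ Γ.adj i, 0 < γ i α) ∧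
  (∀ i : Γ.I, ∑ α ∈ Γ.adj i, γ i α * μ α = 1)

end Network

/-- the Bellman Hamiltonian built from the control data `b`, `f`:
`H_α(x, p) = sup_{a ∈ A} { -b_α(x,a) p - f_α(x,a) }`. -/
def ham (Γ : Network) (A : Type) (b f : Γ.ι → ℝ → A → ℝ) (α : Γ.ι) (y p : ℝ) : ℝ :=
  ⨆ a : A, (-(b α y a) * p - f α y a)

/-- assumption (H2): `b_α, f_α : Γ_α × A → ℝ` continuous, bounded by `K`,
and Lipschitz in `x` with constant `L`, uniformly in `a ∈ A` -/
def H2cond (Γ : Network) (A : Type) [TopologicalSpace A]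
    (b f : Γ.ι → ℝ → A → ℝ) (K L : ℝ) : Prop :=
  ∀ α : Γ.ι,
    ContinuousOn (fun q : ℝ × A => b α q.1 q.2) (Γ.edge α ×ˢ (univ : Set A)) ∧
    ContinuousOn (fun q : ℝ × A => f α q.1 q.2) (Γ.edge α ×ˢ (univ : Set A)) ∧
    (∀ y ∈ Γ.edge α, ∀ a : A, |b α y a| ≤ K ∧ |f α y a| ≤ K) ∧
    (∀ y ∈ Γ.edge α, ∀ z ∈ Γ.edge α, ∀ a : A,
      |b α y a - b α z a| ≤ L * |y - z| ∧ |f α y a - f α z a| ≤ L * |y - z|)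


/-- constancy from zero derivative in the interior -/
lemma my_const_of_deriv0 {f : ℝ → ℝ} {a b : ℝ} (hc : ContinuousOn f (Icc a b))
    (hd : ∀ x ∈ Ioo a b, HasDerivAt f 0 x) : ∀ y ∈ Icc a b, f y = f a := by
  intro y hy
  rcases eq_or_lt_of_le hy.1 with h | h
  · rw [← h]
  · obtain ⟨c, _, hslope⟩ := exists_hasDerivAt_eq_slope f (fun _ => 0) h
      (hc.mono (Icc_subset_Icc le_rfl hy.2))
      (fun x hx => hd x ⟨hx.1, lt_of_lt_of_le hx.2 hy.2⟩)
    have h2 : f y - f a = 0 := by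
      have := hslope.symm
      rcases div_eq_zero_iff.mp this with h3 | h3
      · exact h3
      · exact absurd h3 (by linarith)
    linarith

lemma edge_key (Γ : Network) (α : Γ.ι) (μα : ℝ) (hμ : 0 < μα)
    (g : ℝ → ℝ) (hg : ContinuousOn g (Γ.edge α))
    (f : ℝ → ℝ) (hf : ContDiffOn ℝ 2 f (Γ.edge α))
    (hpde : ∀ y ∈ Ioo 0 (Γ.ℓ α),
      -μα * derivWithin (derivWithin f (Γ.edge α)) (Γ.edge α) y
        + g y * derivWithin f (Γ.edge α) y = 0) :
    (derivWithin f (Γ.edge α) (Γ.ℓ α) = 0 → derivWithin f (Γ.edge α) 0 = 0) ∧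
    (derivWithin f (Γ.edge α) 0 = 0 → ∀ y ∈ Γ.edge α, f y = f 0) ∧
    (0 < derivWithin f (Γ.edge α) 0 → f 0 < f (Γ.ℓ α)) ∧
    (derivWithin f (Γ.edge α) 0 < 0 → f (Γ.ℓ α) < f 0) ∧
    (derivWithin f (Γ.edge α) (Γ.ℓ α) < 0 → f (Γ.ℓ α) < f 0) := by
  set L := Γ.ℓ α with hLdef
  have hL : 0 < L := Γ.ℓ_pos α
  have hedge : Γ.edge α = Icc 0 L := rfl
  set s : Set ℝ := Icc 0 L with hsdef
  rw [hedge] at *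
  set w : ℝ → ℝ := derivWithin f s with hwdef
  have hs : UniqueDiffOn ℝ s := uniqueDiffOn_Icc hL
  have hwcont : ContinuousOn w s := hf.continuousOn_derivWithin hs (by norm_num)
  have hwdiff : ContDiffOn ℝ 1 w s := hf.derivWithin hs (by norm_num)
  have hfdiff : DifferentiableOn ℝ f s := hf.differentiableOn (by norm_num)
  have hmem : ∀ y ∈ Ioo 0 L, s ∈ nhds y := fun y hy => Icc_mem_nhds hy.1 hy.2
  have hvd : ∀ y ∈ Ioo 0 L, HasDerivAt f (w y) y := by
    intro y hy
    have h1 := ((hfdiff y (Ioo_subset_Icc_self hy)).differentiableAt (hmem y hy)).hasDerivAt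
    rwa [← derivWithin_of_mem_nhds (hmem y hy)] at h1
  have hwd : ∀ y ∈ Ioo 0 L, HasDerivAt w (derivWithin w s y) y := by
    intro y hy
    have h1 := (((hwdiff.differentiableOn (by norm_num)) y
      (Ioo_subset_Icc_self hy)).differentiableAt (hmem y hy)).hasDerivAt
    rwa [← derivWithin_of_mem_nhds (hmem y hy)] at h1
  -- clamped coefficient
  set gc : ℝ → ℝ := fun y => g (max 0 (min y L)) / μα with hgcdef
  have hclamp : ∀ y, max 0 (min y L) ∈ s := fun y =>
    ⟨le_max_left _ _, max_le hL.le (min_le_right _ _)⟩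
  have hgccont : Continuous gc := by
    apply Continuous.div_const
    exact hg.comp_continuous (by fun_prop) hclamp
  have hgce : ∀ y ∈ s, gc y = g y / μα := by
    intro y hy
    simp only [hgcdef, min_eq_left hy.2, max_eq_right hy.1]
  set G : ℝ → ℝ := fun y => ∫ t in (0:ℝ)..y, gc t with hGdef
  have hG : ∀ y, HasDerivAt G (gc y) y := fun y =>
    intervalIntegral.integral_hasDerivAt_right (hgccont.intervalIntegrable _ _)
      (hgccont.stronglyMeasurableAtFilter _ _) hgccont.continuousAt
  have hGcont : Continuous G := by
    apply continuous_iff_continuousAt.mpr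
    exact fun y => (hG y).continuousAt
  have hG0 : G 0 = 0 := intervalIntegral.integral_same
  set φ : ℝ → ℝ := fun y => w y * Real.exp (-G y) with hφdef
  have hφcont : ContinuousOn φ s :=
    hwcont.mul ((Real.continuous_exp.comp hGcont.neg).continuousOn)
  have hφd : ∀ y ∈ Ioo 0 L, HasDerivAt φ 0 y := by
    intro y hy
    have hexp : HasDerivAt (fun y => Real.exp (-G y)) (Real.exp (-G y) * -gc y) y :=
      ((hG y).neg).exp
    have hprod := (hwd y hy).mul hexp
    have hys : y ∈ s := Ioo_subset_Icc_self hy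
    have hd2 : derivWithin w s y = gc y * w y := by
      have h1 : -μα * derivWithin w s y + g y * w y = 0 := hpde y hy
      have h2 := hgce y hys
      rw [h2]
      field_simp
      linarith
    have hprod' : HasDerivAt φ (derivWithin w s y * Real.exp (-G y) + w y * (Real.exp (-G y) * -gc y)) y := hprod
    convert hprod' using 1
    rw [hd2]; ring
  have hφconst := my_const_of_deriv0 hφcont hφd
  have hφ0 : φ 0 = w 0 := by simp [hφdef, hG0]
  have key : ∀ y ∈ s, w y = w 0 * Real.exp (G y) := by
    intro y hy
    have h1 := hφconst y hy
    rw [hφ0] at h1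
    have h2 : Real.exp (-G y) * Real.exp (G y) = 1 := by
      rw [← Real.exp_add]; simp
    calc w y = w y * (Real.exp (-G y) * Real.exp (G y)) := by rw [h2]; ring
    _ = φ y * Real.exp (G y) := by rw [hφdef]; ring
    _ = w 0 * Real.exp (G y) := by rw [h1]
  have hLs : L ∈ s := ⟨hL.le, le_rfl⟩
  have h0s : (0:ℝ) ∈ s := ⟨le_rfl, hL.le⟩
  have K1 : w L = 0 → w 0 = 0 := by
    intro h
    have h1 := key L hLs
    rw [h] at h1
    rcases mul_eq_zero.mp h1.symm with h2 | h2
    · exact h2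
    · exact absurd h2 (Real.exp_ne_zero _)
  have K2 : w 0 = 0 → ∀ y ∈ s, f y = f 0 := by
    intro h
    apply my_const_of_deriv0 hf.continuousOn
    intro y hy
    have h1 := hvd y hy
    rwa [key y (Ioo_subset_Icc_self hy), h, zero_mul] at h1
  have K3 : 0 < w 0 → f 0 < f L := by
    intro h
    obtain ⟨c, hc, hslope⟩ := exists_hasDerivAt_eq_slope f w hL hf.continuousOn hvd
    have h1 : 0 < w c := by
      rw [key c (Ioo_subset_Icc_self hc)]
      positivity
    rw [hslope] at h1
    rcases div_pos_iff.mp h1 with ⟨h2, h3⟩ | ⟨h2, h3⟩ <;> linarith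
  have K4 : w 0 < 0 → f L < f 0 := by
    intro h
    obtain ⟨c, hc, hslope⟩ := exists_hasDerivAt_eq_slope f w hL hf.continuousOn hvd
    have h1 : w c < 0 := by
      rw [key c (Ioo_subset_Icc_self hc)]
      have := Real.exp_pos (G c)
      nlinarith
    rw [hslope] at h1
    rcases div_neg_iff.mp h1 with ⟨h2, h3⟩ | ⟨h2, h3⟩
    · linarith
    · linarith
  refine ⟨K1, K2, K3, fun h => K4 h, fun h => ?_⟩
  apply K4
  by_contra h2
  push_neg at h2
  have h3 := key L hLs
  nlinarith [Real.exp_pos (G L), h]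

/-- Lemma 3.2, strong maximum principle on a network.
Assume (H1) and let `Γ` be connected. Let `g : Γ → ℝ` be piecewise continuous
(`g_α ∈ C([0,ℓ_α])` for every `α`). If `v ∈ C²(Γ)` satisfies `-μ_α ∂²v + g ∂v = 0` on
`Γ_α∖𝒱` for every `α ∈ 𝒜` and the Kirchhoff condition at every vertex, then `v` is
constant on `Γ`; conversely, every constant function satisfies this problem. -/
theorem strong_maximum_principle_network
    (Γ : Network) (hconn : Γ.Conn)
    (μ : Γ.ι → ℝ) (γ : Γ.I → Γ.ι → ℝ) (hH1 : Γ.H1cond μ γ)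
    (g : Γ.ι → ℝ → ℝ) (hg : ∀ α, ContinuousOn (g α) (Γ.edge α)) :
    (∀ v : Γ.ι → ℝ → ℝ, Γ.Cm 2 v →
      (∀ α, ∀ y ∈ Ioo 0 (Γ.ℓ α), -(μ α) * Γ.d2 v α y + g α y * Γ.d1 v α y = 0) →
      (∀ i : Γ.I, ∑ α ∈ Γ.adj i, γ i α * μ α * Γ.outDeriv v α i = 0) →
      ∃ c : ℝ, ∀ α, ∀ y ∈ Γ.edge α, v α y = c) ∧
    (∀ c : ℝ,
      Γ.Cm 2 (fun _ _ => c) ∧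
      (∀ α, ∀ y ∈ Ioo 0 (Γ.ℓ α),
        -(μ α) * Γ.d2 (fun _ _ => c) α y + g α y * Γ.d1 (fun _ _ => c) α y = 0) ∧
      (∀ i : Γ.I, ∑ α ∈ Γ.adj i, γ i α * μ α * Γ.outDeriv (fun _ _ => c) α i = 0)) := by
  obtain ⟨hμpos, hγpos, -⟩ := hH1
  constructor
  · intro v hv hpde hkirch
    have hkey := fun α => edge_key Γ α (μ α) (hμpos α) (g α) (hg α) (v α) (hv.1 α)
      (fun y hy => hpde α y hy)
    rcases isEmpty_or_nonempty Γ.ι with hE | hE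
    · exact ⟨0, fun α => (hE.false α).elim⟩
    · haveI : Nonempty Γ.I := ⟨Γ.e0 (Classical.arbitrary _)⟩
      have hadj : ∀ i : Γ.I, ∃ α, α ∈ Γ.adj i := by
        intro i
        obtain ⟨α0⟩ := hE
        rcases (hconn (Γ.e0 α0) i).cases_tail with h | ⟨b, -, α, -, hα2⟩
        · exact ⟨α0, Finset.mem_filter.mpr ⟨Finset.mem_univ _, Or.inl h.symm⟩⟩
        · exact ⟨α, Finset.mem_filter.mpr ⟨Finset.mem_univ _, hα2⟩⟩
      choose pick hpick using hadj
      set V : Γ.I → ℝ := fun i => Γ.valAt v (pick i) i with hVdef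
      have hVal : ∀ i, ∀ α ∈ Γ.adj i, Γ.valAt v α i = V i := fun i α hα =>
        hv.2 i α hα (pick i) (hpick i)
      have hmemadj0 : ∀ α, α ∈ Γ.adj (Γ.e0 α) := fun α =>
        Finset.mem_filter.mpr ⟨Finset.mem_univ _, Or.inl rfl⟩
      have hmemadj1 : ∀ α, α ∈ Γ.adj (Γ.e1 α) := fun α =>
        Finset.mem_filter.mpr ⟨Finset.mem_univ _, Or.inr rfl⟩
      have hval0 : ∀ α, v α 0 = V (Γ.e0 α) := by
        intro α
        rw [← hVal (Γ.e0 α) α (hmemadj0 α)]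
        simp [Network.valAt]
      have hval1 : ∀ α, v α (Γ.ℓ α) = V (Γ.e1 α) := by
        intro α
        rw [← hVal (Γ.e1 α) α (hmemadj1 α)]
        simp [Network.valAt, Γ.no_loop α]
      have hne : (Finset.univ : Finset Γ.I).Nonempty := Finset.univ_nonempty
      set M := Finset.univ.sup' hne V with hMdef
      obtain ⟨i0, -, hi0⟩ := Finset.exists_mem_eq_sup' hne V
      have hle : ∀ i, V i ≤ M := fun i => Finset.le_sup' V (Finset.mem_univ i)
      have hstep : ∀ i, V i = M → ∀ α, Γ.incident α i → ∀ y ∈ Γ.edge α, v α y = M := by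
        intro i hi α hαi
        have hout : ∀ β ∈ Γ.adj i, 0 ≤ Γ.outDeriv v β i := by
          intro β hβ
          unfold Network.outDeriv
          by_cases h0 : Γ.e0 β = i
          · rw [if_pos h0]
            by_contra hc
            push_neg at hc
            have h1 : 0 < Γ.d1 v β 0 := by linarith
            have h2 := (hkey β).2.2.1 h1
            rw [hval0 β, hval1 β, h0, hi] at h2
            exact absurd h2 (not_lt.mpr (hle _))
          · rw [if_neg h0]
            by_contra hc
            push_neg at hc
            have h2 := (hkey β).2.2.2.2 hc
            have h1 : Γ.e1 β = i := by
              rcases (Finset.mem_filter.mp hβ).2 with h | h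
              · exact absurd h h0
              · exact h
            rw [hval0 β, hval1 β, h1, hi] at h2
            exact absurd h2 (not_lt.mpr (hle _))
        have hzero : ∀ β ∈ Γ.adj i, Γ.outDeriv v β i = 0 := by
          intro β hβ
          have hterm := (Finset.sum_eq_zero_iff_of_nonneg (fun β hβ =>
            mul_nonneg (mul_nonneg (hγpos i β hβ).le (hμpos β).le)
              (hout β hβ))).mp (hkirch i) β hβ
          have hγμ : γ i β * μ β ≠ 0 := (mul_pos (hγpos i β hβ) (hμpos β)).ne'
          rcases mul_eq_zero.mp hterm with h | h
          · exact absurd h hγμ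
          · exact h
        have hαadj : α ∈ Γ.adj i := Finset.mem_filter.mpr ⟨Finset.mem_univ _, hαi⟩
        have hz := hzero α hαadj
        unfold Network.outDeriv at hz
        have hw0 : Γ.d1 v α 0 = 0 := by
          by_cases h0 : Γ.e0 α = i
          · rw [if_pos h0] at hz; linarith
          · rw [if_neg h0] at hz
            exact (hkey α).1 hz
        have hconst := (hkey α).2.1 hw0
        have hv0M : v α 0 = M := by
          by_cases h0 : Γ.e0 α = i
          · rw [hval0 α, h0, hi]
          · have h1 : Γ.e1 α = i := by
              rcases hαi with h | h
              · exact absurd h h0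
              · exact h
            have h2 : v α (Γ.ℓ α) = v α 0 := hconst _ ⟨(Γ.ℓ_pos α).le, le_rfl⟩
            rw [← h2, hval1 α, h1, hi]
        intro y hy
        rw [hconst y hy, hv0M]
      have hall : ∀ j, V j = M := by
        intro j
        have h := hconn i0 j
        induction h with
        | refl => exact hi0.symm
        | tail hab hr ih =>
            obtain ⟨α, hα1, hα2⟩ := hr
            have hc := hstep _ ih α hα1
            rcases hα2 with h | h
            · rw [← h, ← hval0 α]
              exact hc 0 ⟨le_rfl, (Γ.ℓ_pos α).le⟩
            · rw [← h, ← hval1 α]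
              exact hc (Γ.ℓ α) ⟨(Γ.ℓ_pos α).le, le_rfl⟩
      exact ⟨M, fun α y hy => hstep (Γ.e0 α) (hall _) α (Or.inl rfl) y hy⟩
  · intro c
    have hd1 : ∀ α, ∀ y ∈ Γ.edge α, Γ.d1 (fun _ _ => c) α y = 0 := fun α y hy =>
      congrFun (derivWithin_fun_const (s := Γ.edge α) (c := c)) y
    refine ⟨⟨fun α => contDiffOn_const, fun i α hα β hβ => ?_⟩, ?_, ?_⟩
    · simp [Network.valAt]
    · intro α y hy
      have hy' : y ∈ Γ.edge α := Ioo_subset_Icc_self hy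
      have h2 : Γ.d2 (fun _ _ => c) α y = 0 := by
        unfold Network.d2
        rw [derivWithin_congr (fun z hz => hd1 α z hz) (hd1 α y hy')]
        exact congrFun (derivWithin_fun_const (s := Γ.edge α) (c := (0:ℝ))) y
      rw [h2, hd1 α y hy']
      ring
    · intro i
      apply Finset.sum_eq_zero
      intro β hβ
      have hout : Γ.outDeriv (fun _ _ => c) β i = 0 := by
        unfold Network.outDeriv
        by_cases h0 : Γ.e0 β = i
        · rw [if_pos h0, hd1 β 0 ⟨le_rfl, (Γ.ℓ_pos β).le⟩, neg_zero]
        · rw [if_neg h0]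
          exact hd1 β (Γ.ℓ β) ⟨(Γ.ℓ_pos β).le, le_rfl⟩
      rw [hout, mul_zero]
end
end

section
/- Comparison principle for the discounted HJ equation on a network: assume (H1)–(H2) and let λ ∈ (0,1). If u, v ∈ C²(Γ) satisfy −μ_α ∂²v + H_α(x,∂v) + λv ≥ −μ_α ∂²u + H_α(x,∂u) + λu pointwise on Γ_α∖𝒱 for every α ∈ 𝒜, and Σ_{α∈𝒜_i} γ_{iα} μ_α ∂_α v(ν_i) ≥ Σ_{α∈𝒜_i} γ_{iα} μ_α ∂_α u(ν_i) at every vertex ν_i, then v ≥ u on Γ. -/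
open scoped Classical
open Set MeasureTheory

noncomputable section

section AuxComparison

open Filter Topology

/-- At a left-endpoint maximum on `[0,ℓ]`, the one-sided derivative is `≤ 0`. -/
lemma aux_left_deriv_nonpos {g : ℝ → ℝ} {d ℓ : ℝ} (hℓ : 0 < ℓ)
    (hmax : ∀ y ∈ Icc (0:ℝ) ℓ, g y ≤ g 0) (hd : HasDerivWithinAt g d (Icc 0 ℓ) 0) : d ≤ 0 := by
  have hy : ℓ ∈ posTangentConeAt (Icc (0:ℝ) ℓ) 0 := by
    have : ℓ - 0 ∈ posTangentConeAt (Icc (0:ℝ) ℓ) 0 :=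
      sub_mem_posTangentConeAt_of_segment_subset (by rw [segment_eq_Icc hℓ.le])
    simpa using this
  have hM : IsLocalMaxOn g (Icc (0:ℝ) ℓ) 0 := (isMaxOn_iff.2 hmax).localize
  have := hM.hasFDerivWithinAt_nonpos hd.hasFDerivWithinAt hy
  simp only [ContinuousLinearMap.toSpanSingleton_apply,
    smul_eq_mul] at this
  nlinarith

/-- At a right-endpoint maximum on `[0,ℓ]`, the one-sided derivative is `≥ 0`. -/
lemma aux_right_deriv_nonneg {g : ℝ → ℝ} {d ℓ : ℝ} (hℓ : 0 < ℓ)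
    (hmax : ∀ y ∈ Icc (0:ℝ) ℓ, g y ≤ g ℓ) (hd : HasDerivWithinAt g d (Icc 0 ℓ) ℓ) : 0 ≤ d := by
  have hy : -ℓ ∈ posTangentConeAt (Icc (0:ℝ) ℓ) ℓ := by
    have : (0:ℝ) - ℓ ∈ posTangentConeAt (Icc (0:ℝ) ℓ) ℓ :=
      sub_mem_posTangentConeAt_of_segment_subset
        (by rw [segment_symm, segment_eq_Icc hℓ.le])
    simpa using this
  have hM : IsLocalMaxOn g (Icc (0:ℝ) ℓ) ℓ := (isMaxOn_iff.2 hmax).localize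
  have := hM.hasFDerivWithinAt_nonpos hd.hasFDerivWithinAt hy
  simp only [ContinuousLinearMap.toSpanSingleton_apply,
    smul_eq_mul] at this
  nlinarith

/-- Core ODE lemma (forward direction): a function satisfying
`lam * w ≤ μ w'' + K |w'|` cannot have an interior-or-left-endpoint maximum point with
value `M > 0` and vanishing derivative. -/
lemma aux_core_fwd {ℓ μ lam K M : ℝ} (hμ : 0 < μ) (hlam : 0 < lam) (hK : 0 ≤ K) (hM : 0 < M)
    {w W' W'' : ℝ → ℝ}
    (hw : ∀ y ∈ Icc (0:ℝ) ℓ, HasDerivWithinAt w (W' y) (Icc 0 ℓ) y)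
    (hW' : ∀ y ∈ Icc (0:ℝ) ℓ, HasDerivWithinAt W' (W'' y) (Icc 0 ℓ) y)
    (hpde : ∀ y ∈ Ioo (0:ℝ) ℓ, lam * w y ≤ μ * W'' y + K * |W' y|)
    {t₀ : ℝ} (ht₀ : t₀ ∈ Ico (0:ℝ) ℓ) (hmax : ∀ y ∈ Icc (0:ℝ) ℓ, w y ≤ M)
    (hwt : w t₀ = M) (hW't : W' t₀ = 0) : False := by
  have ht₀m : t₀ ∈ Icc (0:ℝ) ℓ := ⟨ht₀.1, ht₀.2.le⟩
  have hcw : ContinuousOn w (Icc (0:ℝ) ℓ) :=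
    fun y hy => (hw y hy).differentiableWithinAt.continuousWithinAt
  have hcW' : ContinuousOn W' (Icc (0:ℝ) ℓ) :=
    fun y hy => (hW' y hy).differentiableWithinAt.continuousWithinAt
  set ε₁ : ℝ := lam * M / (4 * (K + 1)) with hε₁
  have hε₁pos : 0 < ε₁ := by positivity
  have h1 : ∀ᶠ y in 𝓝[Icc (0:ℝ) ℓ] t₀, M / 2 < w y :=
    Filter.Tendsto.eventually_const_lt (by rw [hwt]; linarith) (hcw t₀ ht₀m)
  have h2 : ∀ᶠ y in 𝓝[Icc (0:ℝ) ℓ] t₀, |W' y| < ε₁ := by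
    have habs : ContinuousWithinAt (fun y => |W' y|) (Icc (0:ℝ) ℓ) t₀ := (hcW' t₀ ht₀m).abs
    exact Filter.Tendsto.eventually_lt_const
      (show |W' t₀| < ε₁ by rw [hW't]; simpa using hε₁pos) habs
  rcases Metric.mem_nhdsWithin_iff.1 (h1.and h2) with ⟨ε, hε, hsub⟩
  set δ : ℝ := min (ε / 2) (ℓ - t₀) with hδdef
  have hδ : 0 < δ := lt_min (by linarith) (by linarith [ht₀.2])
  have hδℓ : t₀ + δ ≤ ℓ := by
    have := min_le_right (ε / 2) (ℓ - t₀); simp only [← hδdef] at this; linarith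
  have hkey : ∀ y ∈ Icc t₀ (t₀ + δ), M / 2 < w y ∧ |W' y| < ε₁ := by
    intro y hy
    apply hsub
    constructor
    · have h3 : δ ≤ ε / 2 := min_le_left _ _
      have : |y - t₀| < ε := by
        rw [abs_of_nonneg (by linarith [hy.1])]; linarith [hy.2]
      simpa [Metric.mem_ball, Real.dist_eq] using this
    · exact ⟨le_trans ht₀.1 hy.1, le_trans hy.2 hδℓ⟩
  have hsubIcc : Icc t₀ (t₀ + δ) ⊆ Icc (0:ℝ) ℓ :=
    fun y hy => ⟨le_trans ht₀.1 hy.1, le_trans hy.2 hδℓ⟩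
  have hsubIoo : Ioo t₀ (t₀ + δ) ⊆ Ioo (0:ℝ) ℓ :=
    fun y hy => ⟨lt_of_le_of_lt ht₀.1 hy.1, lt_of_lt_of_le hy.2 hδℓ⟩
  have hKε : K * ε₁ ≤ lam * M / 4 := by
    have h4 : (0:ℝ) < K + 1 := by linarith
    have key : K * (lam * M / (4 * (K + 1))) = lam * M / 4 * (K / (K + 1)) := by
      field_simp
    rw [hε₁, key]
    have hk1 : K / (K + 1) ≤ 1 := by rw [div_le_one h4]; linarith
    exact mul_le_of_le_one_right (by positivity) hk1
  have hW''pos : ∀ y ∈ Ioo t₀ (t₀ + δ), 0 < W'' y := by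
    intro y hy
    have hy' := hsubIoo hy
    have hp := hpde y hy'
    have hk := hkey y ⟨hy.1.le, hy.2.le⟩
    have hKW : K * |W' y| ≤ lam * M / 4 :=
      le_trans (mul_le_mul_of_nonneg_left hk.2.le hK) hKε
    have hlw : lam * (M / 2) < lam * w y := by
      exact (mul_lt_mul_iff_right₀ hlam).2 hk.1
    have hμW : 0 < μ * W'' y := by nlinarith
    by_contra hcon
    push_neg at hcon
    nlinarith
  have hW'mono : StrictMonoOn W' (Icc t₀ (t₀ + δ)) := by
    apply strictMonoOn_of_deriv_pos (convex_Icc _ _) (hcW'.mono hsubIcc)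
    intro y hy
    rw [interior_Icc] at hy
    have hyO : y ∈ Ioo (0:ℝ) ℓ := hsubIoo hy
    have hda : HasDerivAt W' (W'' y) y :=
      (hW' y ⟨hyO.1.le, hyO.2.le⟩).hasDerivAt (Icc_mem_nhds hyO.1 hyO.2)
    rw [hda.deriv]
    exact hW''pos y hy
  have hwmono : StrictMonoOn w (Icc t₀ (t₀ + δ)) := by
    apply strictMonoOn_of_deriv_pos (convex_Icc _ _) (hcw.mono hsubIcc)
    intro y hy
    rw [interior_Icc] at hy
    have hyO : y ∈ Ioo (0:ℝ) ℓ := hsubIoo hy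
    have hda : HasDerivAt w (W' y) y :=
      (hw y ⟨hyO.1.le, hyO.2.le⟩).hasDerivAt (Icc_mem_nhds hyO.1 hyO.2)
    rw [hda.deriv]
    have := hW'mono ⟨le_refl t₀, by linarith⟩ ⟨hy.1.le, hy.2.le⟩ hy.1
    rw [hW't] at this
    exact this
  have hlt : w t₀ < w (t₀ + δ) :=
    hwmono ⟨le_refl t₀, by linarith⟩ ⟨by linarith, le_refl _⟩ (by linarith)
  have := hmax (t₀ + δ) ⟨by linarith [ht₀.1], hδℓ⟩
  rw [hwt] at hlt
  linarith

/-- Backward version of `aux_core_fwd` (by reflection). -/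
lemma aux_core_bwd {ℓ μ lam K M : ℝ} (hμ : 0 < μ) (hlam : 0 < lam) (hK : 0 ≤ K) (hM : 0 < M)
    {w W' W'' : ℝ → ℝ}
    (hw : ∀ y ∈ Icc (0:ℝ) ℓ, HasDerivWithinAt w (W' y) (Icc 0 ℓ) y)
    (hW' : ∀ y ∈ Icc (0:ℝ) ℓ, HasDerivWithinAt W' (W'' y) (Icc 0 ℓ) y)
    (hpde : ∀ y ∈ Ioo (0:ℝ) ℓ, lam * w y ≤ μ * W'' y + K * |W' y|)
    {t₀ : ℝ} (ht₀ : t₀ ∈ Ioc (0:ℝ) ℓ) (hmax : ∀ y ∈ Icc (0:ℝ) ℓ, w y ≤ M)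
    (hwt : w t₀ = M) (hW't : W' t₀ = 0) : False := by
  have hmaps : ∀ y ∈ Icc (0:ℝ) ℓ, ℓ - y ∈ Icc (0:ℝ) ℓ :=
    fun y hy => ⟨by linarith [hy.2], by linarith [hy.1]⟩
  have hMTo : MapsTo (fun y => ℓ - y) (Icc (0:ℝ) ℓ) (Icc (0:ℝ) ℓ) := hmaps
  have hrefl : ∀ y ∈ Icc (0:ℝ) ℓ, HasDerivWithinAt (fun z => ℓ - z) (-1 : ℝ) (Icc (0:ℝ) ℓ) y :=
    fun y _ => by simpa using (hasDerivWithinAt_id y (Icc (0:ℝ) ℓ)).const_sub ℓ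
  refine aux_core_fwd (ℓ := ℓ) hμ hlam hK hM
    (w := fun y => w (ℓ - y)) (W' := fun y => -W' (ℓ - y)) (W'' := fun y => W'' (ℓ - y))
    ?_ ?_ ?_ (t₀ := ℓ - t₀) ⟨by linarith [ht₀.2], by linarith [ht₀.1]⟩ ?_ ?_ ?_
  · intro y hy
    have := (hw (ℓ - y) (hmaps y hy)).comp y (hrefl y hy) hMTo
    simpa [Function.comp_def] using this
  · intro y hy
    have := ((hW' (ℓ - y) (hmaps y hy)).comp y (hrefl y hy) hMTo).neg
    simpa [Function.comp_def, Pi.neg_def] using this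
  · intro y hy
    have hy' : ℓ - y ∈ Ioo (0:ℝ) ℓ := ⟨by linarith [hy.2], by linarith [hy.1]⟩
    have := hpde (ℓ - y) hy'
    simpa [abs_neg] using this
  · intro y hy
    exact hmax (ℓ - y) (hmaps y hy)
  · simpa using hwt
  · simpa using hW't

/-- Lipschitz estimate in `p` for the Bellman Hamiltonian. -/
lemma aux_ham_lip (Γ : Network) (A : Type) [TopologicalSpace A] [Nonempty A]
    (b f : Γ.ι → ℝ → A → ℝ) {K L : ℝ} (hH2 : H2cond Γ A b f K L)
    (α : Γ.ι) {y : ℝ} (hy : y ∈ Γ.edge α) (p q : ℝ) :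
    ham Γ A b f α y p ≤ ham Γ A b f α y q + K * |p - q| := by
  have hb := (hH2 α).2.2.1
  have hbdd : BddAbove (Set.range fun a : A => -(b α y a) * q - f α y a) := by
    refine ⟨K * |q| + K, ?_⟩
    rintro _ ⟨a, rfl⟩
    have h1 := (hb y hy a).1
    have h2 := (hb y hy a).2
    have hbq : |(-(b α y a)) * q| ≤ K * |q| := by
      rw [abs_mul, abs_neg]
      exact mul_le_mul_of_nonneg_right h1 (abs_nonneg q)
    have h3 := le_abs_self ((-(b α y a)) * q)
    have h4 := neg_abs_le (f α y a)
    show -(b α y a) * q - f α y a ≤ K * |q| + K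
    linarith
  apply ciSup_le
  intro a
  have habs : |(-(b α y a)) * (p - q)| ≤ K * |p - q| := by
    rw [abs_mul, abs_neg]
    exact mul_le_mul_of_nonneg_right (hb y hy a).1 (abs_nonneg _)
  have key : -(b α y a) * p - f α y a ≤ (-(b α y a) * q - f α y a) + K * |p - q| := by
    nlinarith [le_abs_self ((-(b α y a)) * (p - q))]
  exact key.trans (add_le_add_left (le_ciSup hbdd a) _)

/-- At a vertex where `u - v` attains the global maximum `M`, all outward derivatives agree. -/
lemma aux_vertex (Γ : Network) (μ : Γ.ι → ℝ) (γ : Γ.I → Γ.ι → ℝ)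
    (hH1 : Γ.H1cond μ γ) (u v : Γ.ι → ℝ → ℝ)
    (hu2 : Γ.VertexCont u) (hv2 : Γ.VertexCont v)
    (hkir : ∀ i : Γ.I,
      ∑ α ∈ Γ.adj i, γ i α * μ α * Γ.outDeriv u α i ≤
      ∑ α ∈ Γ.adj i, γ i α * μ α * Γ.outDeriv v α i)
    {M : ℝ} (hglob : ∀ α, ∀ y ∈ Γ.edge α, u α y - v α y ≤ M)
    (hd1 : ∀ α, ∀ y ∈ Γ.edge α,
      HasDerivWithinAt (fun z => u α z - v α z) (Γ.d1 u α y - Γ.d1 v α y) (Γ.edge α) y)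
    (i : Γ.I) {α₀ : Γ.ι} (hα₀ : α₀ ∈ Γ.adj i)
    (hval : Γ.valAt u α₀ i - Γ.valAt v α₀ i = M) :
    ∀ β ∈ Γ.adj i, Γ.outDeriv u β i = Γ.outDeriv v β i := by
  have hvalβ : ∀ β ∈ Γ.adj i, Γ.valAt u β i - Γ.valAt v β i = M := by
    intro β hβ
    rw [← hu2 i α₀ hα₀ β hβ, ← hv2 i α₀ hα₀ β hβ]
    exact hval
  have hD : ∀ β ∈ Γ.adj i, 0 ≤ Γ.outDeriv u β i - Γ.outDeriv v β i := by
    intro β hβ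
    have hℓ := Γ.ℓ_pos β
    have hvβ := hvalβ β hβ
    by_cases h0 : Γ.e0 β = i
    · have hval0 : u β 0 - v β 0 = M := by
        simpa [Network.valAt, h0] using hvβ
      have hmax0 : ∀ y ∈ Icc (0:ℝ) (Γ.ℓ β), (fun z => u β z - v β z) y ≤
          (fun z => u β z - v β z) 0 := by
        intro y hy
        simp only
        rw [hval0]
        exact hglob β y hy
      have hder := hd1 β 0 ⟨le_refl 0, hℓ.le⟩
      have := aux_left_deriv_nonpos hℓ hmax0 hder
      simp only [Network.outDeriv]
      rw [if_pos h0, if_pos h0]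
      linarith
    · have h1 : Γ.e1 β = i := by
        have : Γ.incident β i := by
          simpa [Network.adj] using hβ
        rcases this with h | h
        · exact absurd h h0
        · exact h
      have hvalℓ : u β (Γ.ℓ β) - v β (Γ.ℓ β) = M := by
        simpa [Network.valAt, h0] using hvβ
      have hmaxℓ : ∀ y ∈ Icc (0:ℝ) (Γ.ℓ β), (fun z => u β z - v β z) y ≤
          (fun z => u β z - v β z) (Γ.ℓ β) := by
        intro y hy
        simp only
        rw [hvalℓ]
        exact hglob β y hy
      have hder := hd1 β (Γ.ℓ β) ⟨hℓ.le, le_refl _⟩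
      have := aux_right_deriv_nonneg hℓ hmaxℓ hder
      simp only [Network.outDeriv]
      rw [if_neg h0, if_neg h0]
      linarith
  have hnn : ∀ β ∈ Γ.adj i, 0 ≤ γ i β * μ β * (Γ.outDeriv u β i - Γ.outDeriv v β i) :=
    fun β hβ => mul_nonneg (mul_nonneg (hH1.2.1 i β hβ).le (hH1.1 β).le) (hD β hβ)
  have hle : ∑ β ∈ Γ.adj i, γ i β * μ β * (Γ.outDeriv u β i - Γ.outDeriv v β i) ≤ 0 := by
    have heq : ∑ β ∈ Γ.adj i, γ i β * μ β * (Γ.outDeriv u β i - Γ.outDeriv v β i)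
        = ∑ β ∈ Γ.adj i, γ i β * μ β * Γ.outDeriv u β i
          - ∑ β ∈ Γ.adj i, γ i β * μ β * Γ.outDeriv v β i := by
      rw [← Finset.sum_sub_distrib]
      exact Finset.sum_congr rfl fun β _ => by ring
    rw [heq]
    linarith [hkir i]
  have hzero := (Finset.sum_eq_zero_iff_of_nonneg hnn).1
    (le_antisymm hle (Finset.sum_nonneg hnn))
  intro β hβ
  have hz := hzero β hβ
  have hpos : 0 < γ i β * μ β := mul_pos (hH1.2.1 i β hβ) (hH1.1 β)
  rcases mul_eq_zero.1 hz with h | h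
  · exact absurd h hpos.ne'
  · linarith [sub_eq_zero.1 h]

end AuxComparison

/-- Lemma 3.3, comparison principle for the discounted HJ equation.
Assume (H1)–(H2) and let `λ ∈ (0,1)`. If `u, v ∈ C²(Γ)` satisfy
`-μ_α ∂²v + H_α(x,∂v) + λv ≥ -μ_α ∂²u + H_α(x,∂u) + λu` pointwise on `Γ_α∖𝒱` for every
`α ∈ 𝒜`, and `Σ_{α∈𝒜_i} γ_{iα} μ_α ∂_α v(ν_i) ≥ Σ_{α∈𝒜_i} γ_{iα} μ_α ∂_α u(ν_i)` at every
vertex `ν_i`, then `v ≥ u` on `Γ`. -/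
theorem comparison_principle_network
    (Γ : Network) (hconn : Γ.Conn)
    (μ : Γ.ι → ℝ) (γ : Γ.I → Γ.ι → ℝ)
    (A : Type) [MetricSpace A] [CompactSpace A] [Nonempty A]
    (b f : Γ.ι → ℝ → A → ℝ) (K L : ℝ)
    (hH1 : Γ.H1cond μ γ) (hH2 : H2cond Γ A b f K L)
    (lam : ℝ) (hlam : lam ∈ Ioo (0:ℝ) 1)
    (u v : Γ.ι → ℝ → ℝ) (hu : Γ.Cm 2 u) (hv : Γ.Cm 2 v)
    (hineq : ∀ α, ∀ y ∈ Ioo 0 (Γ.ℓ α),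
      -(μ α) * Γ.d2 u α y + ham Γ A b f α y (Γ.d1 u α y) + lam * u α y ≤
      -(μ α) * Γ.d2 v α y + ham Γ A b f α y (Γ.d1 v α y) + lam * v α y)
    (hkir : ∀ i : Γ.I,
      ∑ α ∈ Γ.adj i, γ i α * μ α * Γ.outDeriv u α i ≤
      ∑ α ∈ Γ.adj i, γ i α * μ α * Γ.outDeriv v α i) :
    ∀ α, ∀ y ∈ Γ.edge α, u α y ≤ v α y := by
  by_contra hcon
  push_neg at hcon
  obtain ⟨α₁, y₁, hy₁, hlt⟩ := hcon
  haveI : Nonempty Γ.ι := ⟨α₁⟩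
  have hcont : ∀ α, ContinuousOn (fun y => u α y - v α y) (Γ.edge α) :=
    fun α => ((hu.1 α).continuousOn.sub ((hv.1 α).continuousOn))
  have hmaxex : ∀ α : Γ.ι, ∃ s, s ∈ Γ.edge α ∧
      ∀ y ∈ Γ.edge α, u α y - v α y ≤ u α s - v α s := by
    intro α
    obtain ⟨s, hs, hmax⟩ := (isCompact_Icc (a := (0:ℝ)) (b := Γ.ℓ α)).exists_isMaxOn
      (nonempty_Icc.2 (Γ.ℓ_pos α).le) (hcont α)
    exact ⟨s, hs, fun y hy => hmax hy⟩
  choose t ht hmax using hmaxex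
  set Wm : Γ.ι → ℝ := fun α => u α (t α) - v α (t α) with hWm
  set M : ℝ := Finset.univ.sup' Finset.univ_nonempty Wm with hMdef
  obtain ⟨α₀, -, hα₀⟩ := Finset.exists_mem_eq_sup' Finset.univ_nonempty Wm
  have hglob : ∀ α, ∀ y ∈ Γ.edge α, u α y - v α y ≤ M := fun α y hy =>
    (hmax α y hy).trans (Finset.le_sup' Wm (Finset.mem_univ α))
  have hMpos : 0 < M := lt_of_lt_of_le (sub_pos.2 hlt) (hglob α₁ y₁ hy₁)
  have hK0 : 0 ≤ K := by
    have := ((hH2 α₁).2.2.1 0 ⟨le_refl 0, (Γ.ℓ_pos α₁).le⟩ (Classical.arbitrary A)).1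
    exact (abs_nonneg _).trans this
  -- derivative facts on every edge
  have hedge : ∀ α : Γ.ι,
      (∀ y ∈ Γ.edge α, HasDerivWithinAt (fun z => u α z - v α z)
        (Γ.d1 u α y - Γ.d1 v α y) (Γ.edge α) y) ∧
      (∀ y ∈ Γ.edge α, HasDerivWithinAt (fun z => Γ.d1 u α z - Γ.d1 v α z)
        (Γ.d2 u α y - Γ.d2 v α y) (Γ.edge α) y) := by
    intro α
    have hs : UniqueDiffOn ℝ (Γ.edge α) := uniqueDiffOn_Icc (Γ.ℓ_pos α)
    have hdu : ∀ y ∈ Γ.edge α, HasDerivWithinAt (u α) (Γ.d1 u α y) (Γ.edge α) y := fun y hy =>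
      (((hu.1 α).differentiableOn (by norm_num)) y hy).hasDerivWithinAt
    have hdv : ∀ y ∈ Γ.edge α, HasDerivWithinAt (v α) (Γ.d1 v α y) (Γ.edge α) y := fun y hy =>
      (((hv.1 α).differentiableOn (by norm_num)) y hy).hasDerivWithinAt
    have hcu : ContDiffOn ℝ 1 (Γ.d1 u α) (Γ.edge α) := (hu.1 α).derivWithin hs (by norm_num)
    have hcv : ContDiffOn ℝ 1 (Γ.d1 v α) (Γ.edge α) := (hv.1 α).derivWithin hs (by norm_num)
    have hd2u : ∀ y ∈ Γ.edge α, HasDerivWithinAt (Γ.d1 u α) (Γ.d2 u α y) (Γ.edge α) y :=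
      fun y hy => ((hcu.differentiableOn (by norm_num)) y hy).hasDerivWithinAt
    have hd2v : ∀ y ∈ Γ.edge α, HasDerivWithinAt (Γ.d1 v α) (Γ.d2 v α y) (Γ.edge α) y :=
      fun y hy => ((hcv.differentiableOn (by norm_num)) y hy).hasDerivWithinAt
    exact ⟨fun y hy => (hdu y hy).sub (hdv y hy), fun y hy => (hd2u y hy).sub (hd2v y hy)⟩
  -- the differential inequality in usable form
  have hpde : ∀ α, ∀ y ∈ Ioo (0:ℝ) (Γ.ℓ α),
      lam * ((fun z => u α z - v α z) y) ≤
        μ α * (Γ.d2 u α y - Γ.d2 v α y) + K * |Γ.d1 u α y - Γ.d1 v α y| := by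
    intro α y hy
    have h1 := hineq α y hy
    have hyE : y ∈ Γ.edge α := Ioo_subset_Icc_self hy
    have h2 := aux_ham_lip Γ A b f hH2 α hyE (Γ.d1 v α y) (Γ.d1 u α y)
    rw [abs_sub_comm (Γ.d1 v α y) (Γ.d1 u α y)] at h2
    simp only
    linarith
  -- contradiction at the maximizer of u - v on edge α₀
  have htM : u α₀ (t α₀) - v α₀ (t α₀) = M := hα₀.symm
  have hℓ₀ := Γ.ℓ_pos α₀
  have hedge₀ := hedge α₀
  have hEdgeIcc : Γ.edge α₀ = Icc (0:ℝ) (Γ.ℓ α₀) := rfl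
  rcases ht α₀ with ⟨ht0, htℓ⟩
  -- determine that the derivative of u - v vanishes at t α₀
  have hW'zero : Γ.d1 u α₀ (t α₀) - Γ.d1 v α₀ (t α₀) = 0 := by
    rcases eq_or_lt_of_le ht0 with h0 | h0
    · -- t α₀ = 0 : vertex e0 α₀
      have hadj : α₀ ∈ Γ.adj (Γ.e0 α₀) := by
        exact Finset.mem_filter.2 ⟨Finset.mem_univ _, Or.inl rfl⟩
      have hval : Γ.valAt u α₀ (Γ.e0 α₀) - Γ.valAt v α₀ (Γ.e0 α₀) = M := by
        rw [← h0] at htM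
        simpa [Network.valAt] using htM
      have hout := aux_vertex Γ μ γ hH1 u v hu.2 hv.2 hkir hglob
        (fun α => (hedge α).1) (Γ.e0 α₀) hadj hval α₀ hadj
      rw [← h0]
      simp [Network.outDeriv] at hout

      linarith
    rcases eq_or_lt_of_le htℓ with hℓe | hℓe
    · -- t α₀ = ℓ α₀ : vertex e1 α₀
      have hadj : α₀ ∈ Γ.adj (Γ.e1 α₀) := by
        exact Finset.mem_filter.2 ⟨Finset.mem_univ _, Or.inr rfl⟩
      have hne : ¬ (Γ.e0 α₀ = Γ.e1 α₀) := Γ.no_loop α₀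
      have hval : Γ.valAt u α₀ (Γ.e1 α₀) - Γ.valAt v α₀ (Γ.e1 α₀) = M := by
        rw [hℓe] at htM
        simpa [Network.valAt, hne] using htM
      have hout := aux_vertex Γ μ γ hH1 u v hu.2 hv.2 hkir hglob
        (fun α => (hedge α).1) (Γ.e1 α₀) hadj hval α₀ hadj
      rw [hℓe]
      simp [Network.outDeriv, hne] at hout
      linarith
    · -- interior point
      have hIoo : t α₀ ∈ Ioo (0:ℝ) (Γ.ℓ α₀) := ⟨h0, hℓe⟩
      have hda : HasDerivAt (fun z => u α₀ z - v α₀ z)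
          (Γ.d1 u α₀ (t α₀) - Γ.d1 v α₀ (t α₀)) (t α₀) :=
        (hedge₀.1 (t α₀) ⟨ht0, htℓ⟩).hasDerivAt (Icc_mem_nhds hIoo.1 hIoo.2)
      have hlm : IsLocalMax (fun z => u α₀ z - v α₀ z) (t α₀) :=
        (isMaxOn_iff.2 (fun y hy => (hglob α₀ y hy).trans_eq htM.symm)).isLocalMax
          (Icc_mem_nhds hIoo.1 hIoo.2)
      exact hlm.hasDerivAt_eq_zero hda
  -- now apply the core lemma
  rcases eq_or_lt_of_le htℓ with hℓe | hℓe
  · -- t α₀ = ℓ α₀ : backward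
    exact aux_core_bwd (ℓ := Γ.ℓ α₀) (hH1.1 α₀) hlam.1 hK0 hMpos
      (W' := fun y => Γ.d1 u α₀ y - Γ.d1 v α₀ y)
      (W'' := fun y => Γ.d2 u α₀ y - Γ.d2 v α₀ y)
      hedge₀.1 hedge₀.2 (hpde α₀) (t₀ := t α₀)
      (by rw [hℓe]; exact ⟨hℓ₀, le_refl _⟩)
      (hglob α₀) htM hW'zero
  · -- t α₀ < ℓ α₀ : forward
    exact aux_core_fwd (ℓ := Γ.ℓ α₀) (hH1.1 α₀) hlam.1 hK0 hMpos
      (W' := fun y => Γ.d1 u α₀ y - Γ.d1 v α₀ y)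
      (W'' := fun y => Γ.d2 u α₀ y - Γ.d2 v α₀ y)
      hedge₀.1 hedge₀.2 (hpde α₀) (t₀ := t α₀) ⟨ht0, hℓe⟩
      (hglob α₀) htM hW'zero
end
end

section
/- L∞ estimate for the discounted values: assume (H1) and let b^i_α, f^i_α (i = 1,2) satisfy (H2) with the same constants K, L, let H^i_α(x,p) = sup_{a∈A}{−b^i_α(x,a)p − f^i_α(x,a)}, and let F^i : Γ → ℝ be bounded. For λ ∈ (0,1) let v^λ_i be the classical solution of the discounted problem with Hamiltonian H^i_α(x,p) + F^i_α(x). Then λ‖v^λ_1 − v^λ_2‖_{L∞(Γ)} ≤ max_{α∈𝒜} ( K̄ max_{x,a}|b^1_α(x,a)−b^2_α(x,a)| + max_{x,a}|f^1_α(x,a)−f^2_α(x,a)| + max_x|F^1_α(x)−F^2_α(x)| ), where K̄ = C₁(1+K+L) is the a priori C^{2,θ}(Γ) bound for v^λ_i − ⟨v^λ_i⟩. -/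
open scoped Classical
open Set MeasureTheory

noncomputable section

/-- `max_{x ∈ Γ_α, a ∈ A} |g_α(x,a)|` -/
def supAbsBF (Γ : Network) (A : Type) (g : Γ.ι → ℝ → A → ℝ) (α : Γ.ι) : ℝ :=
  sSup {c | ∃ y ∈ Γ.edge α, ∃ a : A, c = |g α y a|}


open Filter Topology



lemma derivWithin_nonpos_of_isMaxOn_left {g : ℝ → ℝ} {a b x : ℝ} (hxb : x < b)
    (hx : x ∈ Icc a b) (hmax : ∀ y ∈ Icc a b, g y ≤ g x)
    (hd : DifferentiableWithinAt ℝ g (Icc a b) x) :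
    derivWithin g (Icc a b) x ≤ 0 := by
  have hslope := hd.hasDerivWithinAt
  rw [hasDerivWithinAt_iff_tendsto_slope] at hslope
  have hsub : Ioc x b ⊆ Icc a b \ {x} := fun y hy =>
    ⟨⟨hx.1.trans hy.1.le, hy.2⟩, fun h => absurd h (hy.1.ne')⟩
  have hne : (𝓝[Ioc x b] x).NeBot := by
    refine mem_closure_iff_nhdsWithin_neBot.mp ?_
    rw [closure_Ioc hxb.ne]
    exact ⟨le_rfl, hxb.le⟩
  have htd := hslope.mono_left (nhdsWithin_mono x hsub)
  refine le_of_tendsto htd ?_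
  filter_upwards [self_mem_nhdsWithin] with y hy
  rw [slope_def_field]
  have h1 : g y - g x ≤ 0 := sub_nonpos.2 (hmax y ⟨hx.1.trans hy.1.le, hy.2⟩)
  have h2 : 0 ≤ y - x := sub_nonneg.2 hy.1.le
  exact div_nonpos_iff.2 (Or.inr ⟨h1, h2⟩)

lemma derivWithin_nonneg_of_isMaxOn_right {g : ℝ → ℝ} {a b x : ℝ} (hax : a < x)
    (hx : x ∈ Icc a b) (hmax : ∀ y ∈ Icc a b, g y ≤ g x)
    (hd : DifferentiableWithinAt ℝ g (Icc a b) x) :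
    0 ≤ derivWithin g (Icc a b) x := by
  have hslope := hd.hasDerivWithinAt
  rw [hasDerivWithinAt_iff_tendsto_slope] at hslope
  have hsub : Ico a x ⊆ Icc a b \ {x} := fun y hy =>
    ⟨⟨hy.1, hy.2.le.trans hx.2⟩, fun h => absurd h hy.2.ne⟩
  have hne : (𝓝[Ico a x] x).NeBot := by
    refine mem_closure_iff_nhdsWithin_neBot.mp ?_
    rw [closure_Ico hax.ne]
    exact ⟨hax.le, le_rfl⟩
  have htd := hslope.mono_left (nhdsWithin_mono x hsub)
  refine ge_of_tendsto htd ?_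
  filter_upwards [self_mem_nhdsWithin] with y hy
  rw [slope_def_field]
  have h1 : g y - g x ≤ 0 := sub_nonpos.2 (hmax y ⟨hy.1, hy.2.le.trans hx.2⟩)
  have h2 : y - x ≤ 0 := sub_nonpos.2 hy.2.le
  exact div_nonneg_iff.2 (Or.inr ⟨h1, h2⟩)



lemma deriv2Within_nonpos_of_isMaxOn {g : ℝ → ℝ} {b x : ℝ} (hb : 0 < b)
    (hg : ContDiffOn ℝ 2 g (Icc 0 b)) (hx : x ∈ Icc 0 b)
    (hmax : ∀ y ∈ Icc 0 b, g y ≤ g x)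
    (hd1 : derivWithin g (Icc 0 b) x = 0) :
    derivWithin (derivWithin g (Icc 0 b)) (Icc 0 b) x ≤ 0 := by
  set s : Set ℝ := Icc 0 b with hs
  set g1 : ℝ → ℝ := derivWithin g s with hg1def
  set g2 : ℝ → ℝ := derivWithin g1 s with hg2def
  have hu : UniqueDiffOn ℝ s := uniqueDiffOn_Icc hb
  have hg1 : ContDiffOn ℝ 1 g1 s := hg.derivWithin hu (by norm_num)
  have hg2c : ContinuousOn g2 s := hg1.continuousOn_derivWithin hu le_rfl
  by_contra hpos
  push_neg at hpos
  have hev : ∀ᶠ y in 𝓝[s] x, 0 < g2 y := (hg2c x hx).eventually (eventually_gt_nhds hpos)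
  rw [eventually_iff, Metric.mem_nhdsWithin_iff] at hev
  obtain ⟨δ, hδ, hball'⟩ := hev
  have hball : ∀ y ∈ s, dist y x < δ → 0 < g2 y := fun y hy hd =>
    hball' ⟨Metric.mem_ball.2 hd, hy⟩
  -- common facts
  have hgd : DifferentiableOn ℝ g s := hg.differentiableOn (by norm_num)
  have hg1d : DifferentiableOn ℝ g1 s := hg1.differentiableOn one_ne_zero
  rcases (lt_or_eq_of_le hx.1) with hx0 | hx0
  · -- 0 < x : work on the left interval [c, x]
    set c : ℝ := max 0 (x - δ / 2) with hc
    have hcx : c < x := max_lt hx0 (by linarith)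
    have hJs : Icc c x ⊆ s := fun y hy => ⟨(le_max_left 0 _).trans hy.1, hy.2.trans hx.2⟩
    have hJball : ∀ y ∈ Icc c x, dist y x < δ := by
      intro y hy
      rw [Real.dist_eq, abs_of_nonpos (by linarith [hy.2])]
      have : x - δ / 2 ≤ c := le_max_right _ _
      linarith [hy.1]
    have hint : ∀ y ∈ interior (Icc c x), s ∈ 𝓝 y := by
      intro y hy
      rw [interior_Icc] at hy
      exact Icc_mem_nhds (lt_of_le_of_lt (le_max_left 0 _) hy.1) (lt_of_lt_of_le hy.2 hx.2)
    have hg1pos : ∀ y ∈ interior (Icc c x), 0 < deriv g1 y := by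
      intro y hy
      have hys : y ∈ s := hJs (interior_subset hy)
      have := (hg1d y hys).differentiableAt (hint y hy)
      rw [← derivWithin_of_mem_nhds (hint y hy)]
      exact hball y hys (hJball y (interior_subset hy))
    have hmono : StrictMonoOn g1 (Icc c x) :=
      strictMonoOn_of_deriv_pos (convex_Icc c x) (hg1.continuousOn.mono hJs) hg1pos
    have hg1neg : ∀ y ∈ interior (Icc c x), deriv g y < 0 := by
      intro y hy
      have hys : y ∈ s := hJs (interior_subset hy)
      rw [← derivWithin_of_mem_nhds (hint y hy)]
      have h1 : g1 y < g1 x := by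
        refine hmono (interior_subset hy) (right_mem_Icc.2 hcx.le) ?_
        rw [interior_Icc] at hy; exact hy.2
      calc derivWithin g s y < derivWithin g s x := h1
      _ = 0 := hd1
    have hanti : StrictAntiOn g (Icc c x) :=
      strictAntiOn_of_deriv_neg (convex_Icc c x) (hg.continuousOn.mono hJs) hg1neg
    have : g x < g c := hanti (left_mem_Icc.2 hcx.le) (right_mem_Icc.2 hcx.le) hcx
    exact absurd (hmax c (hJs (left_mem_Icc.2 hcx.le))) (not_le.2 this)
  · -- x = 0 : work on the right interval [x, c]
    have hxb : x < b := by rw [← hx0]; exact hb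
    set c : ℝ := min b (x + δ / 2) with hc
    have hcx : x < c := lt_min hxb (by linarith)
    have hJs : Icc x c ⊆ s := fun y hy =>
      ⟨hx.1.trans hy.1, hy.2.trans (min_le_left _ _)⟩
    have hJball : ∀ y ∈ Icc x c, dist y x < δ := by
      intro y hy
      rw [Real.dist_eq, abs_of_nonneg (by linarith [hy.1])]
      have : c ≤ x + δ / 2 := min_le_right _ _
      linarith [hy.2]
    have hint : ∀ y ∈ interior (Icc x c), s ∈ 𝓝 y := by
      intro y hy
      rw [interior_Icc] at hy
      refine Icc_mem_nhds ?_ (lt_of_lt_of_le hy.2 (min_le_left _ _))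
      calc (0:ℝ) ≤ x := hx.1
      _ < y := hy.1
    have hg1pos : ∀ y ∈ interior (Icc x c), 0 < deriv g1 y := by
      intro y hy
      have hys : y ∈ s := hJs (interior_subset hy)
      have := (hg1d y hys).differentiableAt (hint y hy)
      rw [← derivWithin_of_mem_nhds (hint y hy)]
      exact hball y hys (hJball y (interior_subset hy))
    have hmono : StrictMonoOn g1 (Icc x c) :=
      strictMonoOn_of_deriv_pos (convex_Icc x c) (hg1.continuousOn.mono hJs) hg1pos
    have hg1pos' : ∀ y ∈ interior (Icc x c), 0 < deriv g y := by
      intro y hy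
      have hys : y ∈ s := hJs (interior_subset hy)
      rw [← derivWithin_of_mem_nhds (hint y hy)]
      have h1 : g1 x < g1 y := by
        refine hmono (left_mem_Icc.2 hcx.le) (interior_subset hy) ?_
        rw [interior_Icc] at hy; exact hy.1
      calc (0:ℝ) = derivWithin g s x := hd1.symm
      _ < derivWithin g s y := h1
    have hmono' : StrictMonoOn g (Icc x c) :=
      strictMonoOn_of_deriv_pos (convex_Icc x c) (hg.continuousOn.mono hJs) hg1pos'
    have : g x < g c := hmono' (left_mem_Icc.2 hcx.le) (right_mem_Icc.2 hcx.le) hcx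
    exact absurd (hmax c (hJs (right_mem_Icc.2 hcx.le))) (not_le.2 this)


section AuxHam

variable {Γ : Network} {A : Type} [MetricSpace A] [CompactSpace A] [Nonempty A]

lemma ham_range_bddAbove {b f : Γ.ι → ℝ → A → ℝ} {K L : ℝ} (hbf : H2cond Γ A b f K L)
    {α : Γ.ι} {z : ℝ} (hz : z ∈ Γ.edge α) (q : ℝ) :
    BddAbove (Set.range fun a : A => -b α z a * q - f α z a) := by
  refine ⟨K * |q| + K, ?_⟩
  rintro _ ⟨a, rfl⟩
  show -b α z a * q - f α z a ≤ K * |q| + K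
  have hb := ((hbf α).2.2.1 z hz a).1
  have hf := ((hbf α).2.2.1 z hz a).2
  have h1 : -(b α z a * q) ≤ |b α z a * q| := neg_le_abs _
  have h2 : -(f α z a) ≤ |f α z a| := neg_le_abs _
  rw [abs_mul] at h1
  have h3 : |b α z a| * |q| ≤ K * |q| := mul_le_mul_of_nonneg_right hb (abs_nonneg _)
  have h4 : |f α z a| ≤ K := hf
  have h0 : -b α z a * q = -(b α z a * q) := by ring
  linarith

/-- one-sided continuity-type bound for the Bellman Hamiltonian -/
lemma ham_le_ham_add_mod {b f : Γ.ι → ℝ → A → ℝ} {K L : ℝ} (hbf : H2cond Γ A b f K L)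
    {α : Γ.ι} {y z : ℝ} (hy : y ∈ Γ.edge α) (hz : z ∈ Γ.edge α) (p q : ℝ) :
    ham Γ A b f α y p ≤ ham Γ A b f α z q + (L * |y - z| * |q| + K * |p - q| + L * |y - z|) := by
  refine ciSup_le fun a => ?_
  have hKb := ((hbf α).2.2.1 y hy a).1
  have hLb := ((hbf α).2.2.2 y hy z hz a).1
  have hLf := ((hbf α).2.2.2 y hy z hz a).2
  have hmem : -b α z a * q - f α z a ≤ ham Γ A b f α z q :=
    le_ciSup (ham_range_bddAbove hbf hz q) a
  have key : -b α y a * p - f α y a ≤ -b α z a * q - f α z a +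
      (L * |y - z| * |q| + K * |p - q| + L * |y - z|) := by
    have e1 : -b α y a * p - f α y a - (-b α z a * q - f α z a) =
        -(b α y a * (p - q)) - ((b α y a - b α z a) * q) - (f α y a - f α z a) := by ring
    have h1 : -(b α y a * (p - q)) ≤ K * |p - q| := by
      refine (neg_le_abs _).trans ?_
      rw [abs_mul]
      exact mul_le_mul_of_nonneg_right hKb (abs_nonneg _)
    have h2 : -((b α y a - b α z a) * q) ≤ L * |y - z| * |q| := by
      refine (neg_le_abs _).trans ?_
      rw [abs_mul]
      exact mul_le_mul_of_nonneg_right hLb (abs_nonneg _)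
    have h3 : -(f α y a - f α z a) ≤ L * |y - z| := (neg_le_abs _).trans (abs_sub_comm (f α y a) (f α z a) ▸ hLf)
    linarith [e1, h1, h2, h3]
  linarith

/-- comparison of two Bellman Hamiltonians at the same point -/
lemma ham_le_ham_add_sup {b1 f1 b2 f2 : Γ.ι → ℝ → A → ℝ} {K L : ℝ}
    (h1 : H2cond Γ A b1 f1 K L) (h2 : H2cond Γ A b2 f2 K L)
    {α : Γ.ι} {y : ℝ} (hy : y ∈ Γ.edge α) (p : ℝ) :
    ham Γ A b2 f2 α y p ≤ ham Γ A b1 f1 α y p +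
      (|p| * supAbsBF Γ A (fun β y' a => b1 β y' a - b2 β y' a) α +
        supAbsBF Γ A (fun β y' a => f1 β y' a - f2 β y' a) α) := by
  have hbddb : ∀ c ∈ {c | ∃ y' ∈ Γ.edge α, ∃ a : A, c = |b1 α y' a - b2 α y' a|}, c ≤ K + K := by
    rintro c ⟨y', hy', a, rfl⟩
    have hb1 := ((h1 α).2.2.1 y' hy' a).1
    have hb2 := ((h2 α).2.2.1 y' hy' a).1
    calc |b1 α y' a - b2 α y' a| ≤ |b1 α y' a| + |b2 α y' a| := abs_sub _ _
    _ ≤ K + K := add_le_add hb1 hb2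
  have hbddf : ∀ c ∈ {c | ∃ y' ∈ Γ.edge α, ∃ a : A, c = |f1 α y' a - f2 α y' a|}, c ≤ K + K := by
    rintro c ⟨y', hy', a, rfl⟩
    have hf1 := ((h1 α).2.2.1 y' hy' a).2
    have hf2 := ((h2 α).2.2.1 y' hy' a).2
    calc |f1 α y' a - f2 α y' a| ≤ |f1 α y' a| + |f2 α y' a| := abs_sub _ _
    _ ≤ K + K := add_le_add hf1 hf2
  refine ciSup_le fun a => ?_
  have hmem : -b1 α y a * p - f1 α y a ≤ ham Γ A b1 f1 α y p :=
    le_ciSup (ham_range_bddAbove h1 hy p) a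
  have hsb : |b1 α y a - b2 α y a| ≤ supAbsBF Γ A (fun β y' a => b1 β y' a - b2 β y' a) α :=
    le_csSup ⟨K + K, hbddb⟩ ⟨y, hy, a, rfl⟩
  have hsf : |f1 α y a - f2 α y a| ≤ supAbsBF Γ A (fun β y' a => f1 β y' a - f2 β y' a) α :=
    le_csSup ⟨K + K, hbddf⟩ ⟨y, hy, a, rfl⟩
  have e1 : -b2 α y a * p - f2 α y a =
      (-b1 α y a * p - f1 α y a) + (b1 α y a - b2 α y a) * p + (f1 α y a - f2 α y a) := by ring
  have h2' : (b1 α y a - b2 α y a) * p ≤ |p| * supAbsBF Γ A (fun β y' a => b1 β y' a - b2 β y' a) α := by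
    calc (b1 α y a - b2 α y a) * p ≤ |(b1 α y a - b2 α y a) * p| := le_abs_self _
    _ = |b1 α y a - b2 α y a| * |p| := abs_mul _ _
    _ ≤ supAbsBF Γ A (fun β y' a => b1 β y' a - b2 β y' a) α * |p| :=
        mul_le_mul_of_nonneg_right hsb (abs_nonneg _)
    _ = _ := mul_comm _ _
  have h3' : f1 α y a - f2 α y a ≤ supAbsBF Γ A (fun β y' a => f1 β y' a - f2 β y' a) α :=
    (le_abs_self _).trans hsf
  linarith

end AuxHam

section AuxCont

variable {Γ : Network} {A : Type} [MetricSpace A] [CompactSpace A] [Nonempty A]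

lemma H2_L_nonneg {b f : Γ.ι → ℝ → A → ℝ} {K L : ℝ} (hbf : H2cond Γ A b f K L) (α : Γ.ι) :
    0 ≤ L := by
  obtain ⟨a⟩ := (inferInstance : Nonempty A)
  have h0 : (0:ℝ) ∈ Γ.edge α := ⟨le_rfl, (Γ.ℓ_pos α).le⟩
  have hl : Γ.ℓ α ∈ Γ.edge α := ⟨(Γ.ℓ_pos α).le, le_rfl⟩
  have h := ((hbf α).2.2.2 0 h0 (Γ.ℓ α) hl a).1
  have h2 : |(0:ℝ) - Γ.ℓ α| = Γ.ℓ α := by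
    rw [zero_sub, abs_neg, abs_of_pos (Γ.ℓ_pos α)]
  rw [h2] at h
  nlinarith [abs_nonneg (b α 0 a - b α (Γ.ℓ α) a), Γ.ℓ_pos α]

lemma ham_comp_continuousWithinAt {b f : Γ.ι → ℝ → A → ℝ} {K L : ℝ}
    (hbf : H2cond Γ A b f K L) {α : Γ.ι} {s : Set ℝ} (hs : s ⊆ Γ.edge α)
    {x : ℝ} (hx : x ∈ Γ.edge α) {φ : ℝ → ℝ} (hφ : ContinuousWithinAt φ s x) :
    ContinuousWithinAt (fun y => ham Γ A b f α y (φ y)) s x := by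
  have hL : 0 ≤ L := H2_L_nonneg hbf α
  rw [ContinuousWithinAt, tendsto_iff_dist_tendsto_zero]
  refine squeeze_zero'
    (g := fun y => L * |y - x| * (|φ x| + |φ y|) + (K * |φ y - φ x| + L * |y - x|))
    (Filter.Eventually.of_forall fun _ => dist_nonneg) ?_ ?_
  · filter_upwards [self_mem_nhdsWithin] with y hy
    have hye : y ∈ Γ.edge α := hs hy
    have hb1 := ham_le_ham_add_mod hbf hye hx (φ y) (φ x)
    have hb2 := ham_le_ham_add_mod hbf hx hye (φ x) (φ y)
    have e1 : |x - y| = |y - x| := abs_sub_comm x y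
    have e2 : |φ x - φ y| = |φ y - φ x| := abs_sub_comm _ _
    rw [e1, e2] at hb2
    have n1 : 0 ≤ L * |y - x| * |φ y| :=
      mul_nonneg (mul_nonneg hL (abs_nonneg _)) (abs_nonneg _)
    have n2 : 0 ≤ L * |y - x| * |φ x| :=
      mul_nonneg (mul_nonneg hL (abs_nonneg _)) (abs_nonneg _)
    rw [Real.dist_eq, abs_le]
    constructor
    · nlinarith [hb1, hb2]
    · nlinarith [hb1, hb2]
  · have t1 : Filter.Tendsto (fun y => |y - x|) (nhdsWithin x s) (nhds 0) := by
      have h : Filter.Tendsto (fun y : ℝ => |y - x|) (nhds x) (nhds |x - x|) :=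
        ((continuous_sub_right x).abs).tendsto x
      simp only [sub_self, abs_zero] at h
      exact h.mono_left nhdsWithin_le_nhds
    have t2 : Filter.Tendsto (fun y => |φ y - φ x|) (nhdsWithin x s) (nhds 0) := by
      have h : Filter.Tendsto (fun y => |φ y - φ x|) (nhdsWithin x s) (nhds |φ x - φ x|) :=
        (hφ.sub (continuousWithinAt_const : ContinuousWithinAt (fun _ => φ x) s x)).abs
      simpa using h
    have t3 : Filter.Tendsto (fun y => |φ y|) (nhdsWithin x s) (nhds |φ x|) := hφ.abs
    have hfin := ((t1.const_mul L).mul ((tendsto_const_nhds (x := |φ x|)).add t3)).add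
      ((t2.const_mul K).add (t1.const_mul L))
    simpa using hfin

end AuxCont

section KeyLemma

/-- main one-sided comparison estimate -/
lemma key_estimate
    (Γ : Network)
    (μ : Γ.ι → ℝ) (γ : Γ.I → Γ.ι → ℝ) (hH1 : Γ.H1cond μ γ)
    (A : Type) [MetricSpace A] [CompactSpace A] [Nonempty A]
    (b1 f1 b2 f2 : Γ.ι → ℝ → A → ℝ) (F1 F2 : Γ.ι → ℝ → ℝ)
    (K L KF : ℝ)
    (h1 : H2cond Γ A b1 f1 K L) (h2 : H2cond Γ A b2 f2 K L)
    (hF1 : ∀ α, ∀ y ∈ Γ.edge α, |F1 α y| ≤ KF)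
    (hF2 : ∀ α, ∀ y ∈ Γ.edge α, |F2 α y| ≤ KF)
    (θ Kbar : ℝ)
    (lam : ℝ) (hlam : lam ∈ Ioo (0:ℝ) 1)
    (v1 v2 : Γ.ι → ℝ → ℝ)
    (hv1 : Γ.IsDiscountedSol μ γ (fun α y p => ham Γ A b1 f1 α y p + F1 α y) lam v1)
    (hv2 : Γ.IsDiscountedSol μ γ (fun α y p => ham Γ A b2 f2 α y p + F2 α y) lam v2)
    (hK1 : Γ.C2θnorm θ (fun α y => v1 α y - Γ.avg v1) ≤ Kbar) :
    ∀ α, ∀ y ∈ Γ.edge α,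
      lam * (v1 α y - v2 α y) ≤
        ⨆ β : Γ.ι,
          (Kbar * supAbsBF Γ A (fun β' y' a => b1 β' y' a - b2 β' y' a) β +
            supAbsBF Γ A (fun β' y' a => f1 β' y' a - f2 β' y' a) β +
            Γ.esup (fun y' => F1 β y' - F2 β y') β) := by
  intro α' y' hy'
  haveI : Nonempty Γ.ι := ⟨α'⟩
  obtain ⟨⟨hsm1, hvc1⟩, hpde1, hkir1⟩ := hv1
  obtain ⟨⟨hsm2, hvc2⟩, hpde2, hkir2⟩ := hv2
  -- basic facts
  have hedge0 : ∀ α, (0:ℝ) ∈ Γ.edge α := fun α => ⟨le_rfl, (Γ.ℓ_pos α).le⟩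
  have hedgeL : ∀ α, Γ.ℓ α ∈ Γ.edge α := fun α => ⟨(Γ.ℓ_pos α).le, le_rfl⟩
  have hu : ∀ α, UniqueDiffOn ℝ (Γ.edge α) := fun α => uniqueDiffOn_Icc (Γ.ℓ_pos α)
  have hcd1 : ∀ α, ContDiffOn ℝ 2 (v1 α) (Γ.edge α) := fun α => by exact_mod_cast hsm1 α
  have hcd2 : ∀ α, ContDiffOn ℝ 2 (v2 α) (Γ.edge α) := fun α => by exact_mod_cast hsm2 α
  set w : Γ.ι → ℝ → ℝ := fun α y => v1 α y - v2 α y with hwdef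
  have hw_cd : ∀ α, ContDiffOn ℝ 2 (w α) (Γ.edge α) := fun α => (hcd1 α).sub (hcd2 α)
  have hw_cont : ∀ α, ContinuousOn (w α) (Γ.edge α) := fun α => (hw_cd α).continuousOn
  have hw_d : ∀ α, DifferentiableOn ℝ (w α) (Γ.edge α) :=
    fun α => (hw_cd α).differentiableOn (by norm_num)
  have hd1cd1 : ∀ α, ContDiffOn ℝ 1 (Γ.d1 v1 α) (Γ.edge α) :=
    fun α => (hcd1 α).derivWithin (hu α) (by norm_num)
  have hd1cd2 : ∀ α, ContDiffOn ℝ 1 (Γ.d1 v2 α) (Γ.edge α) :=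
    fun α => (hcd2 α).derivWithin (hu α) (by norm_num)
  have hd1w : ∀ α, ∀ y ∈ Γ.edge α,
      derivWithin (w α) (Γ.edge α) y = Γ.d1 v1 α y - Γ.d1 v2 α y := by
    intro α y hy
    exact derivWithin_sub
      ((hcd1 α).differentiableOn (by norm_num) y hy)
      ((hcd2 α).differentiableOn (by norm_num) y hy)
  -- maximum point
  have hcpt : ∀ α, IsCompact (Γ.edge α) := fun α => isCompact_Icc
  choose ymax hymem hymax using
    fun α => (hcpt α).exists_isMaxOn ⟨0, hedge0 α⟩ (hw_cont α)
  obtain ⟨α₀, hα₀⟩ := Finite.exists_max (fun α => w α (ymax α))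
  set y₀ : ℝ := ymax α₀ with hy₀def
  set M : ℝ := w α₀ y₀ with hMdef
  have hy₀ : y₀ ∈ Γ.edge α₀ := hymem α₀
  have hM : ∀ β, ∀ z ∈ Γ.edge β, w β z ≤ M := fun β z hz => (hymax β hz).trans (hα₀ β)
  -- valAt and outDeriv of w
  have hvalw : ∀ β i, Γ.valAt w β i = Γ.valAt v1 β i - Γ.valAt v2 β i := by
    intro β i
    simp only [Network.valAt]
    split_ifs <;> rfl
  have houtw : ∀ β i, Γ.outDeriv w β i = Γ.outDeriv v1 β i - Γ.outDeriv v2 β i := by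
    intro β i
    simp only [Network.outDeriv]
    split_ifs with h
    · have := hd1w β 0 (hedge0 β); simp only [Network.d1] at this ⊢; rw [this]; ring
    · exact hd1w β (Γ.ℓ β) (hedgeL β)
  -- outward derivatives nonneg at a max vertex
  have houtnn : ∀ β i, Γ.valAt w β i = M → 0 ≤ Γ.outDeriv w β i := by
    intro β i hval
    simp only [Network.outDeriv]
    split_ifs with h
    · have hw0 : w β 0 = M := by
        simpa only [Network.valAt, if_pos h] using hval
      have hle : derivWithin (w β) (Γ.edge β) 0 ≤ 0 := by
        refine derivWithin_nonpos_of_isMaxOn_left (Γ.ℓ_pos β) (hedge0 β) ?_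
          (hw_d β 0 (hedge0 β))
        intro z hz
        rw [hw0]
        exact hM β z hz
      simpa only [Network.d1] using neg_nonneg.2 hle
    · have hwl : w β (Γ.ℓ β) = M := by
        simpa only [Network.valAt, if_neg h] using hval
      have hge : 0 ≤ derivWithin (w β) (Γ.edge β) (Γ.ℓ β) := by
        refine derivWithin_nonneg_of_isMaxOn_right (Γ.ℓ_pos β) (hedgeL β) ?_
          (hw_d β (Γ.ℓ β) (hedgeL β))
        intro z hz
        rw [hwl]
        exact hM β z hz
      simpa only [Network.d1] using hge
  -- the vertex lemma
  have hvertex : ∀ i : Γ.I, α₀ ∈ Γ.adj i → Γ.valAt w α₀ i = M → Γ.outDeriv w α₀ i = 0 := by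
    intro i hadj hval
    have hvalβ : ∀ β ∈ Γ.adj i, Γ.valAt w β i = M := by
      intro β hβ
      have e1 := hvc1 i α₀ hadj β hβ
      have e2 := hvc2 i α₀ hadj β hβ
      rw [hvalw, ← e1, ← e2, ← hvalw, hval]
    have hnn : ∀ β ∈ Γ.adj i, 0 ≤ γ i β * μ β * Γ.outDeriv w β i := by
      intro β hβ
      exact mul_nonneg (mul_nonneg (hH1.2.1 i β hβ).le (hH1.1 β).le)
        (houtnn β i (hvalβ β hβ))
    have hkw : ∑ β ∈ Γ.adj i, γ i β * μ β * Γ.outDeriv w β i = 0 := by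
      have hterm : ∀ β ∈ Γ.adj i, γ i β * μ β * Γ.outDeriv w β i =
          γ i β * μ β * Γ.outDeriv v1 β i - γ i β * μ β * Γ.outDeriv v2 β i := by
        intro β hβ
        rw [houtw β i]; ring
      rw [Finset.sum_congr rfl hterm, Finset.sum_sub_distrib, hkir1 i, hkir2 i, sub_zero]
    have h0 := (Finset.sum_eq_zero_iff_of_nonneg hnn).mp hkw α₀ hadj
    rcases mul_eq_zero.mp h0 with hc | hc
    · exact absurd hc (ne_of_gt (mul_pos (hH1.2.1 i α₀ hadj) (hH1.1 α₀)))
    · exact hc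
  -- first derivative of w vanishes at the max point
  have hder0 : derivWithin (w α₀) (Γ.edge α₀) y₀ = 0 := by
    rcases eq_or_lt_of_le hy₀.1 with h0 | h0
    · -- y₀ = 0
      have hadj : α₀ ∈ Γ.adj (Γ.e0 α₀) := by
        exact Finset.mem_filter.2 ⟨Finset.mem_univ _, Or.inl rfl⟩
      have hval : Γ.valAt w α₀ (Γ.e0 α₀) = M := by
        show (if Γ.e0 α₀ = Γ.e0 α₀ then w α₀ 0 else w α₀ (Γ.ℓ α₀)) = M
        rw [if_pos rfl, hMdef, ← h0]
      have hout := hvertex (Γ.e0 α₀) hadj hval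
      have he : Γ.outDeriv w α₀ (Γ.e0 α₀) = -(Γ.d1 w α₀ 0) := if_pos rfl
      rw [he, neg_eq_zero] at hout
      rw [← h0]
      exact hout
    · rcases eq_or_lt_of_le hy₀.2 with hℓ | hℓ
      · -- y₀ = ℓ α₀
        have hadj : α₀ ∈ Γ.adj (Γ.e1 α₀) := by
          exact Finset.mem_filter.2 ⟨Finset.mem_univ _, Or.inr rfl⟩
        have hval : Γ.valAt w α₀ (Γ.e1 α₀) = M := by
          show (if Γ.e0 α₀ = Γ.e1 α₀ then w α₀ 0 else w α₀ (Γ.ℓ α₀)) = M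
          rw [if_neg (Γ.no_loop α₀), hMdef, hℓ]
        have hout := hvertex (Γ.e1 α₀) hadj hval
        have he : Γ.outDeriv w α₀ (Γ.e1 α₀) = Γ.d1 w α₀ (Γ.ℓ α₀) :=
          if_neg (Γ.no_loop α₀)
        rw [he] at hout
        rw [hℓ]
        exact hout
      · -- interior
        have hle : derivWithin (w α₀) (Γ.edge α₀) y₀ ≤ 0 :=
          derivWithin_nonpos_of_isMaxOn_left hℓ hy₀
            (fun z hz => hM α₀ z hz) (hw_d α₀ y₀ hy₀)
        have hge : 0 ≤ derivWithin (w α₀) (Γ.edge α₀) y₀ :=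
          derivWithin_nonneg_of_isMaxOn_right h0 hy₀
            (fun z hz => hM α₀ z hz) (hw_d α₀ y₀ hy₀)
        linarith
  -- second derivative of w is nonpositive at the max point
  have hd2w : derivWithin (derivWithin (w α₀) (Γ.edge α₀)) (Γ.edge α₀) y₀ ≤ 0 :=
    deriv2Within_nonpos_of_isMaxOn (Γ.ℓ_pos α₀) (hw_cd α₀) hy₀
      (fun z hz => hM α₀ z hz) hder0
  -- second derivative splits
  have hd2eq : derivWithin (derivWithin (w α₀) (Γ.edge α₀)) (Γ.edge α₀) y₀ =
      Γ.d2 v1 α₀ y₀ - Γ.d2 v2 α₀ y₀ := by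
    have hcongr : derivWithin (derivWithin (w α₀) (Γ.edge α₀)) (Γ.edge α₀) y₀ =
        derivWithin (fun y => Γ.d1 v1 α₀ y - Γ.d1 v2 α₀ y) (Γ.edge α₀) y₀ :=
      derivWithin_congr (fun y hy => hd1w α₀ y hy) (hd1w α₀ y₀ hy₀)
    rw [hcongr]
    exact derivWithin_sub
      ((hd1cd1 α₀).differentiableOn one_ne_zero y₀ hy₀)
      ((hd1cd2 α₀).differentiableOn one_ne_zero y₀ hy₀)
  -- derivatives agree at the max point
  have hp2 : Γ.d1 v2 α₀ y₀ = Γ.d1 v1 α₀ y₀ := by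
    have := hd1w α₀ y₀ hy₀
    rw [hder0] at this
    linarith
  -- abbreviations
  set Sb : ℝ := supAbsBF Γ A (fun β' y' a => b1 β' y' a - b2 β' y' a) α₀ with hSbdef
  set Sf : ℝ := supAbsBF Γ A (fun β' y' a => f1 β' y' a - f2 β' y' a) α₀ with hSfdef
  set SF : ℝ := Γ.esup (fun y' => F1 α₀ y' - F2 α₀ y') α₀ with hSFdef
  have hSb0 : 0 ≤ Sb := Real.sSup_nonneg (by rintro c ⟨z, hz, a, rfl⟩; exact abs_nonneg _)
  have hSf0 : 0 ≤ Sf := Real.sSup_nonneg (by rintro c ⟨z, hz, a, rfl⟩; exact abs_nonneg _)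
  have hSFle : ∀ z ∈ Γ.edge α₀, |F1 α₀ z - F2 α₀ z| ≤ SF := by
    intro z hz
    refine le_csSup ⟨KF + KF, ?_⟩ ⟨z, hz, rfl⟩
    rintro c ⟨z', hz', rfl⟩
    calc |F1 α₀ z' - F2 α₀ z'| ≤ |F1 α₀ z'| + |F2 α₀ z'| := abs_sub _ _
    _ ≤ KF + KF := add_le_add (hF1 α₀ z' hz') (hF2 α₀ z' hz')
  -- the function T and its limit bound
  set T : ℝ → ℝ := fun y => lam * (v1 α₀ y - v2 α₀ y) -
      μ α₀ * (Γ.d2 v1 α₀ y - Γ.d2 v2 α₀ y) +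
      (ham Γ A b1 f1 α₀ y (Γ.d1 v1 α₀ y) - ham Γ A b2 f2 α₀ y (Γ.d1 v2 α₀ y)) with hTdef
  have hTIoo : ∀ y ∈ Ioo 0 (Γ.ℓ α₀), T y = -(F1 α₀ y - F2 α₀ y) := by
    intro y hy
    have e1 := hpde1 α₀ y hy
    have e2 := hpde2 α₀ y hy
    dsimp only at e1 e2
    simp only [hTdef]
    linarith
  have hIoosub : Ioo 0 (Γ.ℓ α₀) ⊆ Γ.edge α₀ := Ioo_subset_Icc_self
  have hc_d1v1 : ContinuousOn (Γ.d1 v1 α₀) (Γ.edge α₀) := (hd1cd1 α₀).continuousOn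
  have hc_d1v2 : ContinuousOn (Γ.d1 v2 α₀) (Γ.edge α₀) := (hd1cd2 α₀).continuousOn
  have hc_d2v1 : ContinuousOn (Γ.d2 v1 α₀) (Γ.edge α₀) :=
    (hd1cd1 α₀).continuousOn_derivWithin (hu α₀) le_rfl
  have hc_d2v2 : ContinuousOn (Γ.d2 v2 α₀) (Γ.edge α₀) :=
    (hd1cd2 α₀).continuousOn_derivWithin (hu α₀) le_rfl
  have hTc : ContinuousWithinAt T (Ioo 0 (Γ.ℓ α₀)) y₀ := by
    have c1 : ContinuousWithinAt (fun y => v1 α₀ y - v2 α₀ y) (Ioo 0 (Γ.ℓ α₀)) y₀ :=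
      (((hcd1 α₀).continuousOn y₀ hy₀).mono hIoosub).sub
        (((hcd2 α₀).continuousOn y₀ hy₀).mono hIoosub)
    have c2 : ContinuousWithinAt (fun y => Γ.d2 v1 α₀ y - Γ.d2 v2 α₀ y) (Ioo 0 (Γ.ℓ α₀)) y₀ :=
      ((hc_d2v1 y₀ hy₀).mono hIoosub).sub ((hc_d2v2 y₀ hy₀).mono hIoosub)
    have c3 : ContinuousWithinAt (fun y => ham Γ A b1 f1 α₀ y (Γ.d1 v1 α₀ y))
        (Ioo 0 (Γ.ℓ α₀)) y₀ :=
      ham_comp_continuousWithinAt h1 hIoosub hy₀ ((hc_d1v1 y₀ hy₀).mono hIoosub)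
    have c4 : ContinuousWithinAt (fun y => ham Γ A b2 f2 α₀ y (Γ.d1 v2 α₀ y))
        (Ioo 0 (Γ.ℓ α₀)) y₀ :=
      ham_comp_continuousWithinAt h2 hIoosub hy₀ ((hc_d1v2 y₀ hy₀).mono hIoosub)
    rw [hTdef]
    exact ((c1.const_mul lam).sub (c2.const_mul (μ α₀))).add (c3.sub c4)
  haveI hNB : (nhdsWithin y₀ (Ioo 0 (Γ.ℓ α₀))).NeBot := by
    refine mem_closure_iff_nhdsWithin_neBot.mp ?_
    rw [closure_Ioo (ne_of_lt (Γ.ℓ_pos α₀))]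
    exact hy₀
  have hTbound : |T y₀| ≤ SF := by
    have hev : ∀ᶠ y in nhdsWithin y₀ (Ioo 0 (Γ.ℓ α₀)), |T y| ≤ SF := by
      filter_upwards [self_mem_nhdsWithin] with y hy
      rw [hTIoo y hy, abs_neg]
      exact hSFle y (hIoosub hy)
    exact le_of_tendsto (hTc.abs) hev
  -- Hamiltonian comparison at the max point
  have hham : ham Γ A b2 f2 α₀ y₀ (Γ.d1 v2 α₀ y₀) ≤
      ham Γ A b1 f1 α₀ y₀ (Γ.d1 v1 α₀ y₀) + (|Γ.d1 v1 α₀ y₀| * Sb + Sf) := by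
    rw [hp2, hSbdef, hSfdef]
    exact ham_le_ham_add_sup h1 h2 hy₀ (Γ.d1 v1 α₀ y₀)
  -- gradient bound
  have hKb : |Γ.d1 v1 α₀ y₀| ≤ Kbar := by
    set v1' : Γ.ι → ℝ → ℝ := fun α y => v1 α y - Γ.avg v1 with hv1'def
    have hdeq : ∀ y ∈ Γ.edge α₀, Γ.d1 v1' α₀ y = Γ.d1 v1 α₀ y := by
      intro y hy
      exact derivWithin_sub_const _
    have himg : (fun y => |Γ.d1 v1' α₀ y|) '' Γ.edge α₀ =
        (fun y => |Γ.d1 v1 α₀ y|) '' Γ.edge α₀ :=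
      Set.image_congr (fun y hy => by rw [hdeq y hy])
    have hbdd : BddAbove ((fun y => |Γ.d1 v1 α₀ y|) '' Γ.edge α₀) :=
      ((hcpt α₀).image_of_continuousOn (hc_d1v1.abs)).bddAbove
    have hmem : |Γ.d1 v1 α₀ y₀| ≤ Γ.esup (Γ.d1 v1' α₀) α₀ := by
      show |Γ.d1 v1 α₀ y₀| ≤ sSup ((fun y => |Γ.d1 v1' α₀ y|) '' Γ.edge α₀)
      rw [himg]
      exact le_csSup hbdd ⟨y₀, hy₀, rfl⟩
    have hesup0 : ∀ (g : ℝ → ℝ) (α : Γ.ι), 0 ≤ Γ.esup g α := by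
      intro g α
      refine Real.sSup_nonneg ?_
      rintro c ⟨z, hz, rfl⟩
      exact abs_nonneg _
    have hsingle : Γ.esup (v1' α₀) α₀ + Γ.esup (Γ.d1 v1' α₀) α₀ + Γ.esup (Γ.d2 v1' α₀) α₀ ≤
        Γ.C2norm v1' :=
      Finset.single_le_sum
        (f := fun α => Γ.esup (v1' α) α + Γ.esup (Γ.d1 v1' α) α + Γ.esup (Γ.d2 v1' α) α)
        (fun a _ => add_nonneg (add_nonneg (hesup0 _ _) (hesup0 _ _)) (hesup0 _ _)) (Finset.mem_univ α₀)
    have hhol : 0 ≤ ⨆ α, holderSemi θ (Γ.d2 v1' α) (Γ.edge α) := by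
      refine Real.iSup_nonneg fun α => ?_
      refine Real.sSup_nonneg ?_
      rintro c ⟨z, hz, z', hz', hne, rfl⟩
      positivity
    have hC2θ : Γ.C2norm v1' + ⨆ α, holderSemi θ (Γ.d2 v1' α) (Γ.edge α) ≤ Kbar := hK1
    have h01 := hesup0 (v1' α₀) α₀
    have h02 := hesup0 (Γ.d2 v1' α₀) α₀
    linarith [hmem, hsingle]
  have hSbK : |Γ.d1 v1 α₀ y₀| * Sb ≤ Kbar * Sb := mul_le_mul_of_nonneg_right hKb hSb0
  -- assemble
  have hμd2 : μ α₀ * (Γ.d2 v1 α₀ y₀ - Γ.d2 v2 α₀ y₀) ≤ 0 := by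
    rw [← hd2eq]
    exact mul_nonpos_of_nonneg_of_nonpos (hH1.1 α₀).le hd2w
  have hTy₀ : T y₀ = lam * M - μ α₀ * (Γ.d2 v1 α₀ y₀ - Γ.d2 v2 α₀ y₀) +
      (ham Γ A b1 f1 α₀ y₀ (Γ.d1 v1 α₀ y₀) - ham Γ A b2 f2 α₀ y₀ (Γ.d1 v2 α₀ y₀)) := by
    simp only [hTdef, hMdef, hwdef]
  have hMle : lam * M ≤ Kbar * Sb + Sf + SF := by
    have habs := (abs_le.mp hTbound).2
    linarith [hμd2, hSbK, hham, hTy₀]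
  calc lam * (v1 α' y' - v2 α' y') ≤ lam * M :=
        mul_le_mul_of_nonneg_left (hM α' y' hy') hlam.1.le
  _ ≤ Kbar * Sb + Sf + SF := hMle
  _ ≤ ⨆ β : Γ.ι,
        (Kbar * supAbsBF Γ A (fun β' y' a => b1 β' y' a - b2 β' y' a) β +
          supAbsBF Γ A (fun β' y' a => f1 β' y' a - f2 β' y' a) β +
          Γ.esup (fun y' => F1 β y' - F2 β y') β) :=
      le_ciSup (f := fun β : Γ.ι =>
          Kbar * supAbsBF Γ A (fun β' y' a => b1 β' y' a - b2 β' y' a) β +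
            supAbsBF Γ A (fun β' y' a => f1 β' y' a - f2 β' y' a) β +
            Γ.esup (fun y' => F1 β y' - F2 β y') β)
        (Set.Finite.bddAbove (Set.finite_range _)) α₀

end KeyLemma

/-- estimate (3.9), `L∞` estimate for the discounted values.
Assume (H1) and let `b^i_α, f^i_α` (`i = 1,2`) satisfy (H2) with the same constants `K, L`,
let `H^i_α(x,p) = sup_{a∈A}{-b^i_α(x,a)p - f^i_α(x,a)}`, and let `F^i : Γ → ℝ` be bounded.
For `λ ∈ (0,1)` let `v^λ_i` be the classical solution of the discounted problem with
Hamiltonian `H^i_α(x,p) + F^i_α(x)`. Then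
`λ‖v^λ_1 - v^λ_2‖_{L∞(Γ)} ≤ max_α ( K̄ max_{x,a}|b¹_α - b²_α| + max_{x,a}|f¹_α - f²_α|
+ max_x |F¹_α - F²_α| )`, where `K̄ = C₁(1+K+L)` is the a priori `C^{2,θ}(Γ)` bound for
`v^λ_i - ⟨v^λ_i⟩`. -/

theorem discounted_Linfty_estimate
    (Γ : Network) (hconn : Γ.Conn)
    (μ : Γ.ι → ℝ) (γ : Γ.I → Γ.ι → ℝ) (hH1 : Γ.H1cond μ γ)
    (A : Type) [MetricSpace A] [CompactSpace A] [Nonempty A]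
    (b1 f1 b2 f2 : Γ.ι → ℝ → A → ℝ) (F1 F2 : Γ.ι → ℝ → ℝ)
    (K L KF : ℝ)
    (h1 : H2cond Γ A b1 f1 K L) (h2 : H2cond Γ A b2 f2 K L)
    (hF1 : ∀ α, ∀ y ∈ Γ.edge α, |F1 α y| ≤ KF)
    (hF2 : ∀ α, ∀ y ∈ Γ.edge α, |F2 α y| ≤ KF)
    (θ Kbar : ℝ) (hθ : θ ∈ Ioo (0:ℝ) 1)
    (lam : ℝ) (hlam : lam ∈ Ioo (0:ℝ) 1)
    (v1 v2 : Γ.ι → ℝ → ℝ)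
    (hv1 : Γ.IsDiscountedSol μ γ (fun α y p => ham Γ A b1 f1 α y p + F1 α y) lam v1)
    (hv2 : Γ.IsDiscountedSol μ γ (fun α y p => ham Γ A b2 f2 α y p + F2 α y) lam v2)
    -- `K̄` is the a priori `C^{2,θ}(Γ)` bound for the normalized solutions
    (hK1 : Γ.C2θnorm θ (fun α y => v1 α y - Γ.avg v1) ≤ Kbar)
    (hK2 : Γ.C2θnorm θ (fun α y => v2 α y - Γ.avg v2) ≤ Kbar) :
    ∀ α, ∀ y ∈ Γ.edge α,
      lam * |v1 α y - v2 α y| ≤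
        ⨆ β : Γ.ι,
          (Kbar * supAbsBF Γ A (fun β' y' a => b1 β' y' a - b2 β' y' a) β +
            supAbsBF Γ A (fun β' y' a => f1 β' y' a - f2 β' y' a) β +
            Γ.esup (fun y' => F1 β y' - F2 β y') β) := by
  intro α y hy
  rcases abs_cases (v1 α y - v2 α y) with ⟨he, _⟩ | ⟨he, _⟩
  · rw [he]
    exact key_estimate Γ μ γ hH1 A b1 f1 b2 f2 F1 F2 K L KF h1 h2 hF1 hF2 θ Kbar
      lam hlam v1 v2 hv1 hv2 hK1 α y hy
  · rw [he, show -(v1 α y - v2 α y) = v2 α y - v1 α y by ring]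
    have hswap := key_estimate Γ μ γ hH1 A b2 f2 b1 f1 F2 F1 K L KF h2 h1 hF2 hF1 θ Kbar
      lam hlam v2 v1 hv2 hv1 hK2 α y hy
    have hsb : ∀ β, supAbsBF Γ A (fun β' y' a => b2 β' y' a - b1 β' y' a) β =
        supAbsBF Γ A (fun β' y' a => b1 β' y' a - b2 β' y' a) β := by
      intro β
      unfold supAbsBF
      congr 1
      ext c
      constructor
      · rintro ⟨z, hz, a, rfl⟩
        exact ⟨z, hz, a, abs_sub_comm _ _⟩
      · rintro ⟨z, hz, a, rfl⟩
        exact ⟨z, hz, a, abs_sub_comm _ _⟩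
    have hsf : ∀ β, supAbsBF Γ A (fun β' y' a => f2 β' y' a - f1 β' y' a) β =
        supAbsBF Γ A (fun β' y' a => f1 β' y' a - f2 β' y' a) β := by
      intro β
      unfold supAbsBF
      congr 1
      ext c
      constructor
      · rintro ⟨z, hz, a, rfl⟩
        exact ⟨z, hz, a, abs_sub_comm _ _⟩
      · rintro ⟨z, hz, a, rfl⟩
        exact ⟨z, hz, a, abs_sub_comm _ _⟩
    have hsF : ∀ β, Γ.esup (fun y' => F2 β y' - F1 β y') β =
        Γ.esup (fun y' => F1 β y' - F2 β y') β := by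
      intro β
      unfold Network.esup
      have hfe : (fun z => |(fun y' => F2 β y' - F1 β y') z|) =
          (fun z => |(fun y' => F1 β y' - F2 β y') z|) :=
        funext fun z => abs_sub_comm _ _
      rw [hfe]
    calc lam * (v2 α y - v1 α y) ≤
        ⨆ β : Γ.ι,
          (Kbar * supAbsBF Γ A (fun β' y' a => b2 β' y' a - b1 β' y' a) β +
            supAbsBF Γ A (fun β' y' a => f2 β' y' a - f1 β' y' a) β +
            Γ.esup (fun y' => F2 β y' - F1 β y') β) := hswap
    _ = ⨆ β : Γ.ι,
          (Kbar * supAbsBF Γ A (fun β' y' a => b1 β' y' a - b2 β' y' a) β +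
            supAbsBF Γ A (fun β' y' a => f1 β' y' a - f2 β' y' a) β +
            Γ.esup (fun y' => F1 β y' - F2 β y') β) := by
        refine iSup_congr fun β => ?_
        rw [hsb, hsf, hsF]
end
end

section
/- Explicit formula for the effective Hamiltonian of a periodic lattice (Lemma 5.1, formula part): fix (x,P,X) ∈ ℝ^N × ℝ^N × S^N. If (v,ρ) = ((v_1,…,v_N), ρ) solves the cell problem on the unit lattice cell, then ρ = −( Σ_{k=1}^N γ_k [ −μ_k X e_k·e_k + ∫_0^1 H_k(x, y, P·e_k) dy ] ) / ( Σ_{k=1}^N γ_k ). In particular the constant ρ for which the cell problem is solvable is unique. -/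
open scoped Classical
open Set MeasureTheory

noncomputable section

/-- points of `ℝ^N` (with the sup norm, equivalent to the Euclidean one) -/
abbrev Vec (N : ℕ) := Fin N → ℝ

/-- `N × N` real matrices -/
abbrev Mat (N : ℕ) := Matrix (Fin N) (Fin N) ℝ

/-- a norm `|X|` on the `N × N` matrices -/
def matNorm {N : ℕ} (X : Mat N) : ℝ := ∑ i, ∑ j, |X i j|

/-- first derivative on the unit interval `[0,1]` (one-sided at the endpoints) -/
def d1I (v : ℝ → ℝ) : ℝ → ℝ := derivWithin v (Icc 0 1)

/-- second derivative on the unit interval `[0,1]` -/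
def d2I (v : ℝ → ℝ) : ℝ → ℝ := derivWithin (d1I v) (Icc 0 1)

/-- the Bellman Hamiltonian on the `k`-th edge direction:
`H_k(x, y, p) = sup_{a ∈ A} { -b_k(x,y,a) p - f_k(x,y,a) }` -/
def latHam {N : ℕ} (A : Type) (b f : Fin N → Vec N → ℝ → A → ℝ) (k : Fin N)
    (x : Vec N) (y p : ℝ) : ℝ :=
  ⨆ a : A, (-(b k x y a) * p - f k x y a)

/-- the standing assumptions on the data `b_k, f_k : ℝ^N × [0,1] × A → ℝ`: continuity,
boundedness by `K` and Lipschitz continuity in `(x,y)` with constant `L`, uniformly in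
`a ∈ A`. -/
def latDataCond {N : ℕ} (A : Type) [TopologicalSpace A]
    (b f : Fin N → Vec N → ℝ → A → ℝ) (K L : ℝ) : Prop :=
  ∀ k : Fin N,
    Continuous (fun q : Vec N × ℝ × A => b k q.1 q.2.1 q.2.2) ∧
    Continuous (fun q : Vec N × ℝ × A => f k q.1 q.2.1 q.2.2) ∧
    (∀ x y a, |b k x y a| ≤ K ∧ |f k x y a| ≤ K) ∧
    (∀ x₁ x₂ : Vec N, ∀ y₁ y₂ : ℝ, ∀ a : A,
      |b k x₁ y₁ a - b k x₂ y₂ a| ≤ L * (‖x₁ - x₂‖ + |y₁ - y₂|) ∧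
      |f k x₁ y₁ a - f k x₂ y₂ a| ≤ L * (‖x₁ - x₂‖ + |y₁ - y₂|))

/-- the cell problem on the unit lattice cell at the frozen slow data `(x, P, X)`:
`v_k ∈ C²([0,1])` represent a `ℤ^N`-periodic function on the unit lattice restricted to the
edges issuing from the origin in the directions `e_k`, and `ρ ∈ ℝ` is such that
continuity and periodicity at the vertices hold, on each edge
`-μ_k (v_k'' + X e_k·e_k) + H_k(x, y, P·e_k) + ρ = 0`, and the Kirchhoff condition
(accounting for the `2N` incident edges via periodicity)
`Σ_k γ_k μ_k (v_k'(1) - v_k'(0)) = 0` holds. -/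
def IsCellSol {N : ℕ} (μ γ : Fin N → ℝ) (H : Fin N → Vec N → ℝ → ℝ → ℝ)
    (x P : Vec N) (X : Mat N) (v : Fin N → ℝ → ℝ) (ρ : ℝ) : Prop :=
  (∀ k, ContDiffOn ℝ 2 (v k) (Icc 0 1)) ∧
  (∀ k j : Fin N, v k 0 = v j 0) ∧
  (∀ k, v k 1 = v k 0) ∧
  (∀ k, ∀ y ∈ Ioo (0:ℝ) 1, -(μ k) * (d2I (v k) y + X k k) + H k x y (P k) + ρ = 0) ∧
  (∑ k, γ k * μ k * (d1I (v k) 1 - d1I (v k) 0)) = 0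


lemma rho_formula_aux {N : ℕ} (hN : 1 ≤ N)
    (μ γ : Fin N → ℝ) (hμ : ∀ k, 0 < μ k) (hγ : ∀ k, 0 < γ k)
    (H : Fin N → Vec N → ℝ → ℝ → ℝ) (x P : Vec N) (X : Mat N)
    (v : Fin N → ℝ → ℝ) (ρ : ℝ) (hsol : IsCellSol μ γ H x P X v ρ) :
    ρ = -(∑ k, γ k * (-(μ k) * X k k + ∫ y in (0:ℝ)..1, H k x y (P k))) /
        (∑ k, γ k) := by
  obtain ⟨hC, -, -, heq, hkir⟩ := hsol
  have hu : UniqueDiffOn ℝ (Icc (0:ℝ) 1) := uniqueDiffOn_Icc one_pos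
  have hone : ∀ᵐ y : ℝ, y ∉ ({1} : Set ℝ) :=
    compl_mem_ae_iff.2 (by simp)
  have key : ∀ k, μ k * (d1I (v k) 1 - d1I (v k) 0)
      = (∫ y in (0:ℝ)..1, H k x y (P k)) - μ k * X k k + ρ := by
    intro k
    have hc : (μ k) ≠ 0 := (hμ k).ne'
    have hC1 : ContDiffOn ℝ 1 (d1I (v k)) (Icc 0 1) :=
      (hC k).derivWithin hu (by norm_num)
    have hcont1 : ContinuousOn (d1I (v k)) (Icc 0 1) := hC1.continuousOn
    have hC2 : ContDiffOn ℝ 0 (d2I (v k)) (Icc 0 1) :=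
      hC1.derivWithin hu (by norm_num)
    have hd2cont : ContinuousOn (d2I (v k)) (Icc 0 1) := hC2.continuousOn
    have hint2 : IntervalIntegrable (d2I (v k)) volume 0 1 :=
      hd2cont.intervalIntegrable_of_Icc zero_le_one
    have hderiv : ∀ y ∈ Ioo (0:ℝ) 1, HasDerivAt (d1I (v k)) (d2I (v k) y) y := by
      intro y hy
      have hmem : Icc (0:ℝ) 1 ∈ nhds y := Icc_mem_nhds hy.1 hy.2
      have hdiff : DifferentiableWithinAt ℝ (d1I (v k)) (Icc 0 1) y :=
        (hC1.differentiableOn one_ne_zero) y (Ioo_subset_Icc_self hy)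
      exact hdiff.hasDerivWithinAt.hasDerivAt hmem
    have hFTC : ∫ y in (0:ℝ)..1, d2I (v k) y = d1I (v k) 1 - d1I (v k) 0 :=
      intervalIntegral.integral_eq_sub_of_hasDerivAt_of_le zero_le_one hcont1 hderiv hint2
    set g : ℝ → ℝ := fun y => (H k x y (P k) + ρ) / μ k - X k k with hg
    have hgeq : ∀ y ∈ Ioo (0:ℝ) 1, d2I (v k) y = g y := by
      intro y hy
      have h0 := heq k y hy
      simp only [hg]
      field_simp
      linarith
    have haemem : ∀ᵐ y ∂(volume : Measure ℝ), y ∈ Set.uIoc (0:ℝ) 1 → d2I (v k) y = g y := by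
      filter_upwards [hone] with y hy1 hy
      rw [Set.uIoc_of_le zero_le_one] at hy
      have : y ∈ Ioo (0:ℝ) 1 := ⟨hy.1, lt_of_le_of_ne hy.2 (by simpa using hy1)⟩
      exact hgeq y this
    have hIg : ∫ y in (0:ℝ)..1, g y = d1I (v k) 1 - d1I (v k) 0 := by
      rw [← hFTC]
      exact (intervalIntegral.integral_congr_ae haemem).symm
    have hgint : IntervalIntegrable g volume 0 1 := by
      refine hint2.congr_ae ?_
      exact (MeasureTheory.ae_restrict_iff' measurableSet_uIoc).2 haemem
    have hHrep : ∀ y : ℝ, H k x y (P k) = μ k * g y + (μ k * X k k - ρ) := by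
      intro y
      simp only [hg]
      field_simp
      ring
    have hIH : ∫ y in (0:ℝ)..1, H k x y (P k)
        = μ k * (∫ y in (0:ℝ)..1, g y) + (μ k * X k k - ρ) := by
      have h1 : ∫ y in (0:ℝ)..1, H k x y (P k)
          = ∫ y in (0:ℝ)..1, (μ k * g y + (μ k * X k k - ρ)) :=
        intervalIntegral.integral_congr (fun y _ => hHrep y)
      rw [h1, intervalIntegral.integral_add (hgint.const_mul (μ k)) intervalIntegrable_const,
        intervalIntegral.integral_const_mul, intervalIntegral.integral_const]
      simp
    rw [hIH, hIg]
    ring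
  have hsum : ∑ k, γ k * ((∫ y in (0:ℝ)..1, H k x y (P k)) - μ k * X k k + ρ) = 0 := by
    have h2 : ∑ k, γ k * ((∫ y in (0:ℝ)..1, H k x y (P k)) - μ k * X k k + ρ)
        = ∑ k, γ k * μ k * (d1I (v k) 1 - d1I (v k) 0) :=
      Finset.sum_congr rfl (fun k _ => by linear_combination (-(γ k)) * key k)
    rw [h2, hkir]
  have hsplit : ∑ k, γ k * ((∫ y in (0:ℝ)..1, H k x y (P k)) - μ k * X k k + ρ)
      = (∑ k, γ k * (-(μ k) * X k k + ∫ y in (0:ℝ)..1, H k x y (P k))) + (∑ k, γ k) * ρ := by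
    rw [Finset.sum_mul, ← Finset.sum_add_distrib]
    exact Finset.sum_congr rfl (fun k _ => by ring)
  have hγpos : 0 < ∑ k, γ k := by
    have : Nonempty (Fin N) := ⟨⟨0, hN⟩⟩
    exact Finset.sum_pos (fun k _ => hγ k) Finset.univ_nonempty
  rw [hsplit] at hsum
  rw [eq_div_iff hγpos.ne']
  linarith

/-- Lemma 5.1, formula for the effective Hamiltonian.
Fix `(x,P,X) ∈ ℝ^N × ℝ^N × S^N`. If `(v, ρ)` solves the cell problem on the unit lattice
cell, then `ρ = -( Σ_k γ_k [ -μ_k X e_k·e_k + ∫₀¹ H_k(x,y,P·e_k) dy ] ) / ( Σ_k γ_k )`.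
In particular the constant `ρ` for which the cell problem is solvable is unique. -/
theorem effective_hamiltonian_formula
    {N : ℕ} (hN : 1 ≤ N)
    (μ γ : Fin N → ℝ) (hμ : ∀ k, 0 < μ k) (hγ : ∀ k, 0 < γ k)
    (hnorm : 2 * ∑ k, γ k * μ k = 1)
    (A : Type) [MetricSpace A] [CompactSpace A] [Nonempty A]
    (b f : Fin N → Vec N → ℝ → A → ℝ) (K L : ℝ) (hbf : latDataCond A b f K L)
    (x P : Vec N) (X : Mat N) (hX : X.IsSymm)
    (v : Fin N → ℝ → ℝ) (ρ : ℝ)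
    (hsol : IsCellSol μ γ (latHam A b f) x P X v ρ) :
    ρ = -(∑ k, γ k * (-(μ k) * X k k + ∫ y in (0:ℝ)..1, latHam A b f k x y (P k))) /
        (∑ k, γ k) ∧
    (∀ (v' : Fin N → ℝ → ℝ) (ρ' : ℝ),
      IsCellSol μ γ (latHam A b f) x P X v' ρ' → ρ' = ρ) := by
  have h1 := rho_formula_aux hN μ γ hμ hγ (latHam A b f) x P X v ρ hsol
  exact ⟨h1, fun v' ρ' h' => by
    rw [rho_formula_aux hN μ γ hμ hγ (latHam A b f) x P X v' ρ' h', h1]⟩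
end
end

section
/- Corrector estimates for the cell problem (Lemma 5.1, estimates part): for every (x,P,X) ∈ ℝ^N × ℝ^N × S^N there exists a unique solution (v,ρ) of the cell problem normalized by ⟨v⟩ := Σ_{k=1}^N ∫_0^1 v_k(y) dy = 0; denote it v(·;x,P,X). There exist constants C̄₁, C̄₂ and θ ∈ (0,1], independent of (x,P,X), such that ‖v(·;x,P,X)‖_{C^{2,θ}} ≤ C̄₁ (1 + |P| + |X|), and for all (x₁,P₁,X₁), (x₂,P₂,X₂): ‖v(·;x₁,P₁,X₁) − v(·;x₂,P₂,X₂)‖_{L∞} ≤ C̄₂ ( |P₁−P₂| + |X₁−X₂| ) + C̄₁ |x₁−x₂| ( 1 + min(|P₁|,|P₂|) + min(|X₁|,|X₂|) ). -/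
open scoped Classical
open Set MeasureTheory

noncomputable section

/-- the mean `⟨v⟩ = Σ_k ∫₀¹ v_k` of a function on the unit lattice cell -/
def cellAvg {N : ℕ} (v : Fin N → ℝ → ℝ) : ℝ := ∑ k, ∫ y in (0:ℝ)..1, v k y

/-- sup norm on the unit interval -/
def cellSup (g : ℝ → ℝ) : ℝ := sSup ((fun y => |g y|) '' Icc (0:ℝ) 1)

/-- the `θ`-Hölder seminorm `[g]_θ` on `[0,1]` -/
def cellHolder (θ : ℝ) (g : ℝ → ℝ) : ℝ :=
  sSup {c | ∃ y ∈ Icc (0:ℝ) 1, ∃ z ∈ Icc (0:ℝ) 1, y ≠ z ∧ c = |g y - g z| / |y - z| ^ θ}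

/-- the `C^{2,θ}` norm `Σ_k Σ_{j≤2} ‖v_k^{(j)}‖_∞ + max_k [v_k'']_θ` of a function on the
unit lattice cell -/
def cellC2θnorm {N : ℕ} (θ : ℝ) (v : Fin N → ℝ → ℝ) : ℝ :=
  (∑ k, (cellSup (v k) + cellSup (d1I (v k)) + cellSup (d2I (v k)))) +
  ⨆ k, cellHolder θ (d2I (v k))

namespace CorrAux
open intervalIntegral

def Gq (q : ℝ → ℝ) (y : ℝ) : ℝ := ∫ s in (0:ℝ)..y, q s
def Wq (q : ℝ → ℝ) (y : ℝ) : ℝ := ∫ t in (0:ℝ)..y, Gq q t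
def aq (q : ℝ → ℝ) : ℝ := - Wq q 1
def cq (N : ℕ) (q : Fin N → ℝ → ℝ) : ℝ :=
  -(∑ k, (aq (q k) / 2 + ∫ y in (0:ℝ)..1, Wq (q k) y)) / N
def Vq (N : ℕ) (q : Fin N → ℝ → ℝ) (k : Fin N) (y : ℝ) : ℝ :=
  cq N q + aq (q k) * y + Wq (q k) y

theorem hasDerivAt_Gq {q : ℝ → ℝ} (hq : Continuous q) (y : ℝ) : HasDerivAt (Gq q) (q y) y :=
  integral_hasDerivAt_right (hq.intervalIntegrable _ _)
    hq.stronglyMeasurable.stronglyMeasurableAtFilter hq.continuousAt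

theorem continuous_Gq {q : ℝ → ℝ} (hq : Continuous q) : Continuous (Gq q) :=
  Differentiable.continuous (fun y => (hasDerivAt_Gq hq y).differentiableAt)

theorem hasDerivAt_Wq {q : ℝ → ℝ} (hq : Continuous q) (y : ℝ) :
    HasDerivAt (Wq q) (Gq q y) y :=
  integral_hasDerivAt_right ((continuous_Gq hq).intervalIntegrable _ _)
    (continuous_Gq hq).stronglyMeasurable.stronglyMeasurableAtFilter
    (continuous_Gq hq).continuousAt

theorem continuous_Wq {q : ℝ → ℝ} (hq : Continuous q) : Continuous (Wq q) :=
  Differentiable.continuous (fun y => (hasDerivAt_Wq hq y).differentiableAt)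

theorem Gq_zero (q : ℝ → ℝ) : Gq q 0 = 0 := integral_same
theorem Wq_zero (q : ℝ → ℝ) : Wq q 0 = 0 := integral_same

theorem hasDerivAt_Vq {N : ℕ} {Q : Fin N → ℝ → ℝ} (hQ : ∀ k, Continuous (Q k))
    (k : Fin N) (y : ℝ) :
    HasDerivAt (Vq N Q k) (aq (Q k) + Gq (Q k) y) y := by
  have h1 : HasDerivAt (fun y : ℝ => cq N Q + aq (Q k) * y) (aq (Q k)) y := by
    simpa using ((hasDerivAt_id y).const_mul (aq (Q k))).const_add (cq N Q)
  exact h1.add (hasDerivAt_Wq (hQ k) y)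

theorem deriv_Vq {N : ℕ} {Q : Fin N → ℝ → ℝ} (hQ : ∀ k, Continuous (Q k)) (k : Fin N) :
    deriv (Vq N Q k) = fun y => aq (Q k) + Gq (Q k) y :=
  funext fun y => (hasDerivAt_Vq hQ k y).deriv

theorem contDiff_Vq {N : ℕ} {Q : Fin N → ℝ → ℝ} (hQ : ∀ k, Continuous (Q k)) (k : Fin N) :
    ContDiff ℝ 2 (Vq N Q k) := by
  have h2 : (2 : WithTop ℕ∞) = 1 + 1 := by norm_num
  rw [h2, contDiff_succ_iff_deriv]
  refine ⟨fun y => (hasDerivAt_Vq hQ k y).differentiableAt, by simp, ?_⟩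
  rw [deriv_Vq hQ k, contDiff_one_iff_deriv]
  have hd : ∀ y, HasDerivAt (fun y => aq (Q k) + Gq (Q k) y) (Q k y) y := fun y =>
    (hasDerivAt_Gq (hQ k) y).const_add _
  refine ⟨fun y => (hd y).differentiableAt, ?_⟩
  have : deriv (fun y => aq (Q k) + Gq (Q k) y) = Q k := funext fun y => (hd y).deriv
  rw [this]; exact hQ k

theorem d1I_Vq {N : ℕ} {Q : Fin N → ℝ → ℝ} (hQ : ∀ k, Continuous (Q k)) (k : Fin N)
    {y : ℝ} (hy : y ∈ Icc (0:ℝ) 1) : d1I (Vq N Q k) y = aq (Q k) + Gq (Q k) y := by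
  rw [d1I, (hasDerivAt_Vq hQ k y).differentiableAt.derivWithin
    (uniqueDiffOn_Icc one_pos y hy)]
  exact (hasDerivAt_Vq hQ k y).deriv

theorem d2I_Vq {N : ℕ} {Q : Fin N → ℝ → ℝ} (hQ : ∀ k, Continuous (Q k)) (k : Fin N)
    {y : ℝ} (hy : y ∈ Icc (0:ℝ) 1) : d2I (Vq N Q k) y = Q k y := by
  rw [d2I]
  have he : EqOn (d1I (Vq N Q k)) (fun t => aq (Q k) + Gq (Q k) t) (Icc 0 1) :=
    fun t ht => d1I_Vq hQ k ht
  rw [derivWithin_congr he (he hy)]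
  have hd := (hasDerivAt_Gq (hQ k) y).const_add (aq (Q k))
  rw [hd.differentiableAt.derivWithin (uniqueDiffOn_Icc one_pos y hy)]
  exact hd.deriv

theorem Vq_zero {N : ℕ} (Q : Fin N → ℝ → ℝ) (k : Fin N) : Vq N Q k 0 = cq N Q := by
  simp [Vq, Wq_zero]

theorem Vq_one {N : ℕ} (Q : Fin N → ℝ → ℝ) (k : Fin N) : Vq N Q k 1 = cq N Q := by
  simp [Vq, aq]

theorem integral_cAW (c : ℝ) {q : ℝ → ℝ} (hq : Continuous q) :
    ∫ y in (0:ℝ)..1, (c + aq q * y + Wq q y)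
      = c + (aq q / 2 + ∫ y in (0:ℝ)..1, Wq q y) := by
  have h1 : Continuous (fun y : ℝ => c + aq q * y) := by continuity
  rw [integral_add (h1.intervalIntegrable _ _) ((continuous_Wq hq).intervalIntegrable _ _),
    integral_add intervalIntegrable_const
      (by apply Continuous.intervalIntegrable; continuity :
        IntervalIntegrable (fun y : ℝ => aq q * y) volume 0 1),
    intervalIntegral.integral_const, intervalIntegral.integral_const_mul, integral_id]
  simp; ring

theorem integral_Vq {N : ℕ} {Q : Fin N → ℝ → ℝ} (hQ : ∀ k, Continuous (Q k)) (k : Fin N) :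
    ∫ y in (0:ℝ)..1, Vq N Q k y
      = cq N Q + (aq (Q k) / 2 + ∫ y in (0:ℝ)..1, Wq (Q k) y) := integral_cAW _ (hQ k)

theorem sum_integral_Vq {N : ℕ} (hN : 1 ≤ N) {Q : Fin N → ℝ → ℝ}
    (hQ : ∀ k, Continuous (Q k)) :
    (∑ k, ∫ y in (0:ℝ)..1, Vq N Q k y) = 0 := by
  have hNne : (N:ℝ) ≠ 0 := by positivity
  have h2 : (∑ k, ∫ y in (0:ℝ)..1, Vq N Q k y)
      = (N:ℝ) * cq N Q + ∑ k, (aq (Q k) / 2 + ∫ y in (0:ℝ)..1, Wq (Q k) y) := by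
    simp only [integral_Vq hQ]
    rw [Finset.sum_add_distrib, Finset.sum_const, Finset.card_univ, Fintype.card_fin,
      nsmul_eq_mul]
  rw [h2, cq]
  field_simp
  ring

theorem abs_Gq_le {q : ℝ → ℝ} {M : ℝ} (hM : ∀ t ∈ Icc (0:ℝ) 1, |q t| ≤ M)
    {y : ℝ} (hy : y ∈ Icc (0:ℝ) 1) : |Gq q y| ≤ M := by
  have hM0 : 0 ≤ M := le_trans (abs_nonneg _) (hM 0 (by norm_num))
  have hb : ∀ t ∈ Set.uIoc (0:ℝ) y, ‖q t‖ ≤ M := by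
    intro t ht
    rw [uIoc_of_le hy.1] at ht
    exact hM t ⟨le_of_lt ht.1, le_trans ht.2 hy.2⟩
  calc |Gq q y| ≤ M * |y - 0| := norm_integral_le_of_norm_le_const hb
    _ ≤ M * 1 := by
        apply mul_le_mul_of_nonneg_left _ hM0
        rw [sub_zero, abs_of_nonneg hy.1]; exact hy.2
    _ = M := mul_one M

theorem abs_Wq_le {q : ℝ → ℝ} {M : ℝ} (hq : Continuous q) (hM : ∀ t ∈ Icc (0:ℝ) 1, |q t| ≤ M)
    {y : ℝ} (hy : y ∈ Icc (0:ℝ) 1) : |Wq q y| ≤ M :=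
  abs_Gq_le (fun t ht => abs_Gq_le hM ht) hy

theorem abs_cq_le {N : ℕ} (hN : 1 ≤ N) {Q : Fin N → ℝ → ℝ} {M : Fin N → ℝ}
    (hQ : ∀ k, Continuous (Q k)) (hM : ∀ k, ∀ t ∈ Icc (0:ℝ) 1, |Q k t| ≤ M k) :
    |cq N Q| ≤ ∑ j, (3/2) * M j := by
  have h1 : |∑ k, (aq (Q k) / 2 + ∫ y in (0:ℝ)..1, Wq (Q k) y)| ≤ ∑ j, (3/2) * M j := by
    refine le_trans (Finset.abs_sum_le_sum_abs _ _) (Finset.sum_le_sum fun j _ => ?_)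
    have ha : |aq (Q j)| ≤ M j := by
      rw [aq, abs_neg]; exact abs_Wq_le (hQ j) (hM j) (by norm_num)
    have hw : |∫ y in (0:ℝ)..1, Wq (Q j) y| ≤ M j :=
      abs_Gq_le (fun t ht => abs_Wq_le (hQ j) (hM j) ht) (by norm_num)
    have h2 := abs_add_le (aq (Q j) / 2) (∫ y in (0:ℝ)..1, Wq (Q j) y)
    rw [abs_div, abs_two] at h2
    calc |aq (Q j) / 2 + ∫ y in (0:ℝ)..1, Wq (Q j) y|
        ≤ |aq (Q j)| / 2 + |∫ y in (0:ℝ)..1, Wq (Q j) y| := h2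
      _ ≤ M j / 2 + M j := by gcongr
      _ = 3/2 * M j := by ring
  have hN1 : (1:ℝ) ≤ N := by exact_mod_cast hN
  rw [cq, abs_div, abs_neg, Nat.abs_cast]
  calc |∑ k, (aq (Q k) / 2 + ∫ y in (0:ℝ)..1, Wq (Q k) y)| / (N:ℝ)
      ≤ |∑ k, (aq (Q k) / 2 + ∫ y in (0:ℝ)..1, Wq (Q k) y)| := div_le_self (abs_nonneg _) hN1
    _ ≤ ∑ j, (3/2) * M j := h1

theorem abs_Vq_le {N : ℕ} (hN : 1 ≤ N) {Q : Fin N → ℝ → ℝ} {M : Fin N → ℝ}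
    (hQ : ∀ k, Continuous (Q k)) (hM : ∀ k, ∀ t ∈ Icc (0:ℝ) 1, |Q k t| ≤ M k)
    (k : Fin N) {y : ℝ} (hy : y ∈ Icc (0:ℝ) 1) :
    |Vq N Q k y| ≤ 2 * M k + ∑ j, (3/2) * M j := by
  have hc := abs_cq_le hN hQ hM
  have haq : |aq (Q k)| ≤ M k := by
    rw [aq, abs_neg]; exact abs_Wq_le (hQ k) (hM k) (by norm_num)
  have hy1 : |y| ≤ 1 := by rw [abs_of_nonneg hy.1]; exact hy.2
  have ha : |aq (Q k) * y| ≤ M k := by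
    rw [abs_mul]
    calc |aq (Q k)| * |y| ≤ M k * 1 :=
          mul_le_mul haq hy1 (abs_nonneg _) (le_trans (abs_nonneg _) haq)
      _ = M k := mul_one _
  have hw : |Wq (Q k) y| ≤ M k := abs_Wq_le (hQ k) (hM k) hy
  calc |Vq N Q k y| ≤ |cq N Q + aq (Q k) * y| + |Wq (Q k) y| := abs_add_le _ _
    _ ≤ (|cq N Q| + |aq (Q k) * y|) + |Wq (Q k) y| := by gcongr; exact abs_add_le _ _
    _ ≤ ((∑ j, (3/2) * M j) + M k) + M k := by gcongr
    _ = 2 * M k + ∑ j, (3/2) * M j := by ring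

theorem Gq_sub {q₁ q₂ : ℝ → ℝ} (h₁ : Continuous q₁) (h₂ : Continuous q₂) (y : ℝ) :
    Gq (fun t => q₁ t - q₂ t) y = Gq q₁ y - Gq q₂ y :=
  integral_sub (h₁.intervalIntegrable _ _) (h₂.intervalIntegrable _ _)

theorem Wq_sub {q₁ q₂ : ℝ → ℝ} (h₁ : Continuous q₁) (h₂ : Continuous q₂) (y : ℝ) :
    Wq (fun t => q₁ t - q₂ t) y = Wq q₁ y - Wq q₂ y := by
  rw [Wq, Wq, Wq, ← integral_sub ((continuous_Gq h₁).intervalIntegrable _ _)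
    ((continuous_Gq h₂).intervalIntegrable _ _)]
  exact integral_congr fun t _ => Gq_sub h₁ h₂ t

theorem Vq_sub {N : ℕ} {Q₁ Q₂ : Fin N → ℝ → ℝ} (h₁ : ∀ k, Continuous (Q₁ k))
    (h₂ : ∀ k, Continuous (Q₂ k)) (k : Fin N) (y : ℝ) :
    Vq N (fun k t => Q₁ k t - Q₂ k t) k y = Vq N Q₁ k y - Vq N Q₂ k y := by
  have hWs : ∀ j : Fin N, ∀ t : ℝ, Wq (fun t => Q₁ j t - Q₂ j t) t = Wq (Q₁ j) t - Wq (Q₂ j) t :=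
    fun j t => Wq_sub (h₁ j) (h₂ j) t
  have has : ∀ j : Fin N, aq (fun t => Q₁ j t - Q₂ j t) = aq (Q₁ j) - aq (Q₂ j) := by
    intro j; rw [aq, aq, aq, hWs j]; ring
  have hIs : ∀ j : Fin N, (∫ t in (0:ℝ)..1, Wq (fun t => Q₁ j t - Q₂ j t) t)
      = (∫ t in (0:ℝ)..1, Wq (Q₁ j) t) - ∫ t in (0:ℝ)..1, Wq (Q₂ j) t := by
    intro j
    rw [← integral_sub ((continuous_Wq (h₁ j)).intervalIntegrable _ _)
      ((continuous_Wq (h₂ j)).intervalIntegrable _ _)]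
    exact integral_congr fun t _ => hWs j t
  have hcs : cq N (fun k t => Q₁ k t - Q₂ k t) = cq N Q₁ - cq N Q₂ := by
    rw [cq, cq, cq]
    have hS : (∑ j, (aq (fun t => Q₁ j t - Q₂ j t) / 2
          + ∫ y in (0:ℝ)..1, Wq (fun t => Q₁ j t - Q₂ j t) y))
        = (∑ j, (aq (Q₁ j) / 2 + ∫ y in (0:ℝ)..1, Wq (Q₁ j) y))
          - ∑ j, (aq (Q₂ j) / 2 + ∫ y in (0:ℝ)..1, Wq (Q₂ j) y) := by
      rw [← Finset.sum_sub_distrib]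
      refine Finset.sum_congr rfl fun j _ => ?_
      rw [has j, hIs j]; ring
    rw [hS]; ring
  rw [Vq, Vq, Vq, hcs, has k, hWs k]; ring

theorem ftc_d1I {w : ℝ → ℝ} (h : ContDiffOn ℝ 1 w (Icc 0 1)) {y : ℝ} (hy : y ∈ Icc (0:ℝ) 1) :
    ∫ t in (0:ℝ)..y, derivWithin w (Icc 0 1) t = w y - w 0 := by
  apply integral_eq_sub_of_hasDeriv_right_of_le hy.1
  · exact h.continuousOn.mono (Icc_subset_Icc le_rfl hy.2)
  · intro t ht
    have ht1 : t ∈ Icc (0:ℝ) 1 := ⟨le_of_lt ht.1, le_of_lt (lt_of_lt_of_le ht.2 hy.2)⟩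
    have hmem : Icc (0:ℝ) 1 ∈ nhds t := Icc_mem_nhds ht.1 (lt_of_lt_of_le ht.2 hy.2)
    exact (((h.differentiableOn one_ne_zero t ht1).hasDerivWithinAt.hasDerivAt
      hmem).hasDerivWithinAt)
  · apply ContinuousOn.intervalIntegrable
    rw [uIcc_of_le hy.1]
    exact (h.continuousOn_derivWithin (uniqueDiffOn_Icc one_pos) le_rfl).mono
      (Icc_subset_Icc le_rfl hy.2)

theorem abs_ciSup_sub_ciSup_le {A : Type} [Nonempty A] {F G : A → ℝ} {C : ℝ}
    (hF : BddAbove (Set.range F)) (hG : BddAbove (Set.range G))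
    (h : ∀ a, |F a - G a| ≤ C) : |(⨆ a, F a) - ⨆ a, G a| ≤ C := by
  rw [abs_le]
  constructor
  · rw [neg_le, neg_sub, sub_le_iff_le_add]
    refine ciSup_le fun a => ?_
    have h1 := (abs_le.1 (h a)).1
    calc G a ≤ F a + C := by linarith
      _ ≤ (⨆ a, F a) + C := by gcongr; exact le_ciSup hF a
      _ = C + ⨆ a, F a := add_comm _ _
  · rw [sub_le_iff_le_add]
    refine ciSup_le fun a => ?_
    have h1 := (abs_le.1 (h a)).2
    calc F a ≤ G a + C := by linarith
      _ ≤ (⨆ a, G a) + C := by gcongr; exact le_ciSup hG a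
      _ = C + ⨆ a, G a := add_comm _ _

theorem abs_ciSup_le {A : Type} [Nonempty A] {F : A → ℝ} {C : ℝ}
    (h : ∀ a, |F a| ≤ C) : |⨆ a, F a| ≤ C := by
  have hF : BddAbove (Set.range F) :=
    ⟨C, by rintro _ ⟨a, rfl⟩; exact (abs_le.1 (h a)).2⟩
  rw [abs_le]
  refine ⟨?_, ciSup_le fun a => (abs_le.1 (h a)).2⟩
  have a0 : A := Classical.arbitrary A
  calc -C ≤ F a0 := (abs_le.1 (h a0)).1
    _ ≤ ⨆ a, F a := le_ciSup hF a0

section Ham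

variable {N : ℕ} {A : Type} [TopologicalSpace A] [Nonempty A]
  {b f : Fin N → Vec N → ℝ → A → ℝ} {K L : ℝ}

theorem ham_term_abs_le (hb : ∀ k x y a, |b k x y a| ≤ K ∧ |f k x y a| ≤ K)
    (k : Fin N) (x : Vec N) (y p : ℝ) (a : A) :
    |(-(b k x y a) * p - f k x y a)| ≤ K * |p| + K := by
  calc |(-(b k x y a) * p - f k x y a)| ≤ |(-(b k x y a)) * p| + |f k x y a| := abs_sub _ _
    _ = |b k x y a| * |p| + |f k x y a| := by rw [abs_mul, abs_neg]
    _ ≤ K * |p| + K := by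
        have h1 := (hb k x y a).1
        have h2 := (hb k x y a).2
        have h3 := mul_le_mul_of_nonneg_right h1 (abs_nonneg p)
        linarith

theorem ham_bddAbove (hb : ∀ k x y a, |b k x y a| ≤ K ∧ |f k x y a| ≤ K)
    (k : Fin N) (x : Vec N) (y p : ℝ) :
    BddAbove (Set.range fun a : A => -(b k x y a) * p - f k x y a) := by
  refine ⟨K * |p| + K, ?_⟩
  rintro _ ⟨a, rfl⟩
  exact (abs_le.1 (ham_term_abs_le hb k x y p a)).2

theorem abs_latHam_le (hb : ∀ k x y a, |b k x y a| ≤ K ∧ |f k x y a| ≤ K)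
    (k : Fin N) (x : Vec N) (y p : ℝ) :
    |latHam A b f k x y p| ≤ K * |p| + K :=
  abs_ciSup_le (fun a => ham_term_abs_le hb k x y p a)

theorem abs_latHam_sub_le (hbf : latDataCond A b f K L)
    (k : Fin N) (x₁ x₂ : Vec N) (y₁ y₂ p₁ p₂ : ℝ) :
    |latHam A b f k x₁ y₁ p₁ - latHam A b f k x₂ y₂ p₂|
      ≤ K * |p₁ - p₂| + L * (‖x₁ - x₂‖ + |y₁ - y₂|) * (1 + |p₂|) := by
  have hb : ∀ k x y a, |b k x y a| ≤ K ∧ |f k x y a| ≤ K := fun k x y a => (hbf k).2.2.1 x y a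
  refine abs_ciSup_sub_ciSup_le (ham_bddAbove hb k x₁ y₁ p₁) (ham_bddAbove hb k x₂ y₂ p₂)
    fun a => ?_
  have hbK := ((hbf k).2.2.1 x₁ y₁ a).1
  have hbl := ((hbf k).2.2.2 x₁ x₂ y₁ y₂ a).1
  have hfl := ((hbf k).2.2.2 x₁ x₂ y₁ y₂ a).2
  have key : (-(b k x₁ y₁ a) * p₁ - f k x₁ y₁ a) - (-(b k x₂ y₂ a) * p₂ - f k x₂ y₂ a)
      = -(b k x₁ y₁ a) * (p₁ - p₂) - (b k x₁ y₁ a - b k x₂ y₂ a) * p₂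
        - (f k x₁ y₁ a - f k x₂ y₂ a) := by ring
  rw [key]
  calc |(-(b k x₁ y₁ a) * (p₁ - p₂) - (b k x₁ y₁ a - b k x₂ y₂ a) * p₂
        - (f k x₁ y₁ a - f k x₂ y₂ a))|
      ≤ |(-(b k x₁ y₁ a) * (p₁ - p₂) - (b k x₁ y₁ a - b k x₂ y₂ a) * p₂)|
        + |f k x₁ y₁ a - f k x₂ y₂ a| := abs_sub _ _
    _ ≤ (|(-(b k x₁ y₁ a)) * (p₁ - p₂)| + |(b k x₁ y₁ a - b k x₂ y₂ a) * p₂|)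
        + |f k x₁ y₁ a - f k x₂ y₂ a| := by gcongr; exact abs_sub _ _
    _ = |b k x₁ y₁ a| * |p₁ - p₂| + |b k x₁ y₁ a - b k x₂ y₂ a| * |p₂|
        + |f k x₁ y₁ a - f k x₂ y₂ a| := by rw [abs_mul, abs_mul, abs_neg]
    _ ≤ K * |p₁ - p₂| + (L * (‖x₁ - x₂‖ + |y₁ - y₂|)) * |p₂|
        + L * (‖x₁ - x₂‖ + |y₁ - y₂|) :=
        add_le_add (add_le_add (mul_le_mul_of_nonneg_right hbK (abs_nonneg _))
          (mul_le_mul_of_nonneg_right hbl (abs_nonneg _))) hfl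
    _ = K * |p₁ - p₂| + L * (‖x₁ - x₂‖ + |y₁ - y₂|) * (1 + |p₂|) := by ring

theorem continuous_latHam_y (hbf : latDataCond A b f K L) (k : Fin N) (x : Vec N) (p : ℝ) :
    Continuous (fun y => latHam A b f k x y p) := by
  have hlip : ∀ y₁ y₂ : ℝ, |latHam A b f k x y₁ p - latHam A b f k x y₂ p|
      ≤ L * (1 + |p|) * |y₁ - y₂| := by
    intro y₁ y₂
    have h := abs_latHam_sub_le hbf k x x y₁ y₂ p p
    simp only [sub_self, abs_zero, norm_zero, mul_zero, zero_add] at h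
    exact h.trans_eq (by ring)
  refine LipschitzWith.continuous (K := (L * (1 + |p|)).toNNReal)
    (LipschitzWith.of_dist_le_mul fun y₁ y₂ => ?_)
  rw [Real.dist_eq, Real.dist_eq]
  refine le_trans (hlip y₁ y₂) ?_
  exact mul_le_mul_of_nonneg_right
    (by rw [Real.coe_toNNReal']; exact le_max_left _ _) (abs_nonneg _)

end Ham

section Sol

variable {N : ℕ} (A : Type) [TopologicalSpace A] [Nonempty A]
  (b f : Fin N → Vec N → ℝ → A → ℝ) (μ γ : Fin N → ℝ)

/-- the effective constant `ρ` of the cell problem -/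
def Rsol (x P : Vec N) (X : Mat N) : ℝ :=
  (∑ k, γ k * (μ k * X k k - ∫ y in (0:ℝ)..1, latHam A b f k x y (P k))) / ∑ k, γ k

/-- the second derivative of the corrector -/
def qsol (x P : Vec N) (X : Mat N) (k : Fin N) (y : ℝ) : ℝ :=
  (latHam A b f k x y (P k) + Rsol A b f μ γ x P X) / μ k - X k k

/-- the corrector -/
def Vsol (x P : Vec N) (X : Mat N) : Fin N → ℝ → ℝ := Vq N (qsol A b f μ γ x P X)

variable {A b f μ γ}

theorem continuous_qsol {K L : ℝ} (hbf : latDataCond A b f K L) (x P : Vec N) (X : Mat N)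
    (k : Fin N) : Continuous (qsol A b f μ γ x P X k) := by
  unfold qsol
  exact (((continuous_latHam_y hbf k x (P k)).add continuous_const).div_const _).sub
    continuous_const

theorem integral_qexpr {K L : ℝ} (hbf : latDataCond A b f K L) (hμ : ∀ k, 0 < μ k)
    (x P : Vec N) (X : Mat N) (k : Fin N) (c : ℝ) :
    ∫ y in (0:ℝ)..1, ((latHam A b f k x y (P k) + c) / μ k - X k k)
      = ((∫ y in (0:ℝ)..1, latHam A b f k x y (P k)) + c) / μ k - X k k := by
  rw [integral_sub (f := fun y => (latHam A b f k x y (P k) + c) / μ k)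
      ((((continuous_latHam_y hbf k x (P k)).add continuous_const).div_const
      _).intervalIntegrable _ _) (intervalIntegrable_const),
    intervalIntegral.integral_const, intervalIntegral.integral_div,
    integral_add (((continuous_latHam_y hbf k x (P k))).intervalIntegrable _ _)
      intervalIntegrable_const, intervalIntegral.integral_const]
  simp

theorem isCellSol_Vsol {K L : ℝ} (hN : 1 ≤ N) (hbf : latDataCond A b f K L)
    (hμ : ∀ k, 0 < μ k) (hγ : ∀ k, 0 < γ k) (x P : Vec N) (X : Mat N) :
    IsCellSol μ γ (latHam A b f) x P X (Vsol A b f μ γ x P X) (Rsol A b f μ γ x P X) := by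
  have hQ : ∀ k, Continuous (qsol A b f μ γ x P X k) := continuous_qsol hbf x P X
  refine ⟨fun k => (contDiff_Vq hQ k).contDiffOn, ?_, ?_, ?_, ?_⟩
  · intro k j; rw [Vsol, Vq_zero, Vq_zero]
  · intro k; rw [Vsol, Vq_one, Vq_zero]
  · intro k y hy
    have hy' : y ∈ Icc (0:ℝ) 1 := ⟨le_of_lt hy.1, le_of_lt hy.2⟩
    rw [Vsol, d2I_Vq hQ k hy', qsol]
    field_simp [(hμ k).ne']
    ring
  · have hd : ∀ k : Fin N, d1I (Vsol A b f μ γ x P X k) 1 - d1I (Vsol A b f μ γ x P X k) 0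
        = Gq (qsol A b f μ γ x P X k) 1 := by
      intro k
      rw [Vsol, d1I_Vq hQ k (by norm_num : (1:ℝ) ∈ Icc (0:ℝ) 1),
        d1I_Vq hQ k (by norm_num : (0:ℝ) ∈ Icc (0:ℝ) 1), Gq_zero]
      ring
    have hGq : ∀ k : Fin N, Gq (qsol A b f μ γ x P X k) 1
        = ((∫ y in (0:ℝ)..1, latHam A b f k x y (P k)) + Rsol A b f μ γ x P X) / μ k
          - X k k := by
      intro k
      rw [Gq]
      unfold qsol
      exact integral_qexpr hbf hμ x P X k _
    have hγsum : (0:ℝ) < ∑ k, γ k := by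
      apply Finset.sum_pos (fun k _ => hγ k)
      exact ⟨⟨0, hN⟩, Finset.mem_univ _⟩
    have e1 : ∀ k : Fin N, γ k * μ k * (d1I (Vsol A b f μ γ x P X k) 1
          - d1I (Vsol A b f μ γ x P X k) 0)
        = γ k * (∫ y in (0:ℝ)..1, latHam A b f k x y (P k)) + γ k * Rsol A b f μ γ x P X
          - γ k * (μ k * X k k) := by
      intro k
      rw [hd k, hGq k]
      field_simp [(hμ k).ne']
    rw [Finset.sum_congr rfl (fun k _ => e1 k)]
    have e2 : ∑ k, (γ k * (∫ y in (0:ℝ)..1, latHam A b f k x y (P k))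
          + γ k * Rsol A b f μ γ x P X - γ k * (μ k * X k k))
        = (∑ k, γ k * (∫ y in (0:ℝ)..1, latHam A b f k x y (P k)))
          + (∑ k, γ k) * Rsol A b f μ γ x P X - ∑ k, γ k * (μ k * X k k) := by
      rw [Finset.sum_sub_distrib, Finset.sum_add_distrib, Finset.sum_mul]
    rw [e2, Rsol]
    have e3 : ∑ k, γ k * (μ k * X k k - ∫ y in (0:ℝ)..1, latHam A b f k x y (P k))
        = (∑ k, γ k * (μ k * X k k))
          - ∑ k, γ k * (∫ y in (0:ℝ)..1, latHam A b f k x y (P k)) := by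
      rw [← Finset.sum_sub_distrib]
      exact Finset.sum_congr rfl fun k _ => by ring
    rw [e3]
    field_simp
    ring

theorem cellAvg_Vsol {K L : ℝ} (hN : 1 ≤ N) (hbf : latDataCond A b f K L)
    (x P : Vec N) (X : Mat N) : cellAvg (Vsol A b f μ γ x P X) = 0 :=
  sum_integral_Vq hN (continuous_qsol hbf x P X)

theorem cellSol_unique {K L : ℝ} (hN : 1 ≤ N) (hbf : latDataCond A b f K L)
    (hμ : ∀ k, 0 < μ k) (hγ : ∀ k, 0 < γ k) (x P : Vec N) (X : Mat N)
    (v : Fin N → ℝ → ℝ) (ρ : ℝ)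
    (hsol : IsCellSol μ γ (latHam A b f) x P X v ρ) (havg : cellAvg v = 0) :
    ρ = Rsol A b f μ γ x P X ∧
      ∀ k, Set.EqOn (v k) (Vsol A b f μ γ x P X k) (Icc 0 1) := by
  obtain ⟨hC2, h00, h10, hPDE, hKir⟩ := hsol
  have hγsum : (0:ℝ) < ∑ k, γ k :=
    Finset.sum_pos (fun k _ => hγ k) ⟨⟨0, hN⟩, Finset.mem_univ _⟩
  have hC1 : ∀ k, ContDiffOn ℝ 1 (v k) (Icc 0 1) := fun k => (hC2 k).of_le (by norm_num)
  have hC1' : ∀ k, ContDiffOn ℝ 1 (d1I (v k)) (Icc 0 1) := fun k =>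
    (hC2 k).derivWithin (uniqueDiffOn_Icc one_pos) (by norm_num)
  -- the second derivative of v on the open interval
  have hd2 : ∀ k, ∀ t ∈ Ioo (0:ℝ) 1,
      d2I (v k) t = (latHam A b f k x t (P k) + ρ) / μ k - X k k := by
    intro k t ht
    have h := hPDE k t ht
    have h2 : d2I (v k) t + X k k = (latHam A b f k x t (P k) + ρ) / μ k := by
      rw [eq_div_iff (hμ k).ne']
      linear_combination -h
    linarith
  have hae1 : ∀ᵐ (t : ℝ), t ≠ 1 := by
    rw [MeasureTheory.ae_iff]
    simp only [ne_eq, not_not, setOf_eq_eq_singleton]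
    exact MeasureTheory.measure_singleton 1
  -- FTC for d1I and the replacement of d2I by the explicit expression
  have hint : ∀ k, ∀ y ∈ Icc (0:ℝ) 1,
      d1I (v k) y - d1I (v k) 0
        = ∫ t in (0:ℝ)..y, ((latHam A b f k x t (P k) + ρ) / μ k - X k k) := by
    intro k y hy
    rw [← ftc_d1I (hC1' k) hy]
    apply intervalIntegral.integral_congr_ae
    filter_upwards [hae1] with t ht1 htm
    rw [uIoc_of_le hy.1] at htm
    have : t ∈ Ioo (0:ℝ) 1 :=
      ⟨htm.1, lt_of_le_of_ne (le_trans htm.2 hy.2) ht1⟩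
    exact hd2 k t this
  -- determination of ρ from the Kirchhoff condition
  have hρ : ρ = Rsol A b f μ γ x P X := by
    have e1 : ∀ k : Fin N, γ k * μ k * (d1I (v k) 1 - d1I (v k) 0)
        = γ k * (∫ y in (0:ℝ)..1, latHam A b f k x y (P k)) + γ k * ρ
          - γ k * (μ k * X k k) := by
      intro k
      rw [hint k 1 (by norm_num), integral_qexpr hbf hμ x P X k ρ]
      field_simp [(hμ k).ne']
    rw [Finset.sum_congr rfl (fun k _ => e1 k), Finset.sum_sub_distrib,
      Finset.sum_add_distrib, ← Finset.sum_mul] at hKir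
    rw [Rsol]
    have e3 : ∑ k, γ k * (μ k * X k k - ∫ y in (0:ℝ)..1, latHam A b f k x y (P k))
        = (∑ k, γ k * (μ k * X k k))
          - ∑ k, γ k * (∫ y in (0:ℝ)..1, latHam A b f k x y (P k)) := by
      rw [← Finset.sum_sub_distrib]
      exact Finset.sum_congr rfl fun k _ => by ring
    rw [e3, eq_div_iff hγsum.ne']
    linear_combination hKir
  subst hρ
  -- now v' is explicit
  have hQ : ∀ k, Continuous (qsol A b f μ γ x P X k) := continuous_qsol hbf x P X
  have hd1 : ∀ k, ∀ y ∈ Icc (0:ℝ) 1,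
      d1I (v k) y = d1I (v k) 0 + Gq (qsol A b f μ γ x P X k) y := by
    intro k y hy
    have := hint k y hy
    rw [Gq]
    have hq : (∫ t in (0:ℝ)..y, ((latHam A b f k x t (P k) + Rsol A b f μ γ x P X) / μ k
        - X k k)) = ∫ t in (0:ℝ)..y, qsol A b f μ γ x P X k t := rfl
    rw [hq] at this
    linarith
  -- FTC for v
  have hv : ∀ k, ∀ y ∈ Icc (0:ℝ) 1,
      v k y = v k 0 + d1I (v k) 0 * y + Wq (qsol A b f μ γ x P X k) y := by
    intro k y hy
    have h1 := ftc_d1I (hC1 k) hy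
    have h2 : (∫ t in (0:ℝ)..y, derivWithin (v k) (Icc 0 1) t)
        = ∫ t in (0:ℝ)..y, (d1I (v k) 0 + Gq (qsol A b f μ γ x P X k) t) := by
      apply intervalIntegral.integral_congr
      intro t htm
      rw [uIcc_of_le hy.1] at htm
      exact hd1 k t ⟨htm.1, le_trans htm.2 hy.2⟩
    rw [h2, integral_add intervalIntegrable_const
      ((continuous_Gq (hQ k)).intervalIntegrable _ _), intervalIntegral.integral_const] at h1
    rw [Wq]
    have h3 : (y - 0) • d1I (v k) 0 = d1I (v k) 0 * y := by rw [smul_eq_mul]; ring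
    rw [h3] at h1
    linarith
  -- periodicity identifies the slope
  have ha : ∀ k, d1I (v k) 0 = aq (qsol A b f μ γ x P X k) := by
    intro k
    have h1 := hv k 1 (by norm_num)
    rw [h10 k] at h1
    rw [aq]
    linarith
  -- the mean condition identifies the constant
  have hvk0 : ∀ k, v k 0 = cq N (qsol A b f μ γ x P X) := by
    have k0 : Fin N := ⟨0, hN⟩
    have hNne : (N:ℝ) ≠ 0 := by positivity
    have hI : ∀ k, (∫ y in (0:ℝ)..1, v k y)
        = v k 0 + (aq (qsol A b f μ γ x P X k) / 2
          + ∫ y in (0:ℝ)..1, Wq (qsol A b f μ γ x P X k) y) := by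
      intro k
      rw [← integral_cAW (v k 0) (hQ k)]
      apply intervalIntegral.integral_congr
      intro t htm
      rw [uIcc_of_le (by norm_num : (0:ℝ) ≤ 1)] at htm
      rw [hv k t htm, ha k]
    have hsum : (0:ℝ) = ∑ k, (v k 0 + (aq (qsol A b f μ γ x P X k) / 2
        + ∫ y in (0:ℝ)..1, Wq (qsol A b f μ γ x P X k) y)) := by
      rw [← Finset.sum_congr rfl (fun k _ => hI k)]
      exact havg.symm
    rw [Finset.sum_add_distrib] at hsum
    have hv00 : ∑ k, v k 0 = (N:ℝ) * v k0 0 := by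
      rw [Finset.sum_congr rfl (fun k _ => h00 k k0), Finset.sum_const, Finset.card_univ,
        Fintype.card_fin, nsmul_eq_mul]
    rw [hv00] at hsum
    have hcqv : v k0 0 = cq N (qsol A b f μ γ x P X) := by
      rw [cq, eq_div_iff hNne]
      have : (N:ℝ) * v k0 0
          = -∑ k, (aq (qsol A b f μ γ x P X k) / 2
            + ∫ y in (0:ℝ)..1, Wq (qsol A b f μ γ x P X k) y) := by linarith
      linear_combination this
    intro k
    rw [h00 k k0, hcqv]
  refine ⟨rfl, fun k y hy => ?_⟩
  rw [hv k y hy, ha k, hvk0 k, Vsol, Vq]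

end Sol

section Norms

theorem matNorm_nonneg {N : ℕ} (X : Mat N) : 0 ≤ matNorm X :=
  Finset.sum_nonneg fun i _ => Finset.sum_nonneg fun j _ => abs_nonneg _

theorem abs_diag_le_matNorm {N : ℕ} (X : Mat N) (k : Fin N) : |X k k| ≤ matNorm X := by
  calc |X k k| ≤ ∑ j, |X k j| :=
        Finset.single_le_sum (fun j _ => abs_nonneg (X k j)) (Finset.mem_univ k)
    _ ≤ ∑ i, ∑ j, |X i j| :=
        Finset.single_le_sum (f := fun i => ∑ j, |X i j|)
          (fun i _ => Finset.sum_nonneg fun j _ => abs_nonneg _) (Finset.mem_univ k)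

theorem abs_apply_le_norm {N : ℕ} (P : Vec N) (k : Fin N) : |P k| ≤ ‖P‖ := by
  have := norm_le_pi_norm P k
  simpa using this

theorem cellSup_le {g : ℝ → ℝ} {C : ℝ} (h : ∀ y ∈ Icc (0:ℝ) 1, |g y| ≤ C) :
    cellSup g ≤ C := by
  apply Real.sSup_le
  · rintro _ ⟨y, hy, rfl⟩
    exact h y hy
  · exact le_trans (abs_nonneg _) (h 0 (by norm_num))

theorem cellHolder_one_le {g : ℝ → ℝ} {C : ℝ} (hC : 0 ≤ C)
    (h : ∀ y ∈ Icc (0:ℝ) 1, ∀ z ∈ Icc (0:ℝ) 1, |g y - g z| ≤ C * |y - z|) :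
    cellHolder 1 g ≤ C := by
  apply Real.sSup_le _ hC
  rintro c ⟨y, hy, z, hz, hyz, rfl⟩
  have hpos : 0 < |y - z| := abs_pos.2 (sub_ne_zero.2 hyz)
  rw [Real.rpow_one, div_le_iff₀ hpos]
  exact h y hy z hz

end Norms

section Bounds

variable {N : ℕ} {A : Type} [TopologicalSpace A] [Nonempty A]
  {b f : Fin N → Vec N → ℝ → A → ℝ} {μ γ : Fin N → ℝ} {K L : ℝ}

/-- constant dominating `|ρ|/(1+|P|+|X|)` -/
def cRb (μ γ : Fin N → ℝ) (K : ℝ) : ℝ := (∑ j, γ j * (μ j + K)) / ∑ j, γ j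

/-- constant dominating the second derivative of the corrector -/
def BB (μ γ : Fin N → ℝ) (K : ℝ) (k : Fin N) : ℝ := (K + cRb μ γ K) / μ k + 1

/-- constant for the `x`-Lipschitz estimate on the second derivative -/
def DL (μ : Fin N → ℝ) (L : ℝ) (k : Fin N) : ℝ := 2 * L / μ k

theorem abs_latHam_le' (hbf : latDataCond A b f K L) (hK0 : 0 ≤ K)
    (k : Fin N) (x P : Vec N) (y : ℝ) :
    |latHam A b f k x y (P k)| ≤ K * (1 + ‖P‖) := by
  have h := abs_latHam_le (fun k x y a => (hbf k).2.2.1 x y a) k x y (P k)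
  have h2 : |P k| ≤ ‖P‖ := abs_apply_le_norm P k
  nlinarith

theorem abs_intH_le (hbf : latDataCond A b f K L) (hK0 : 0 ≤ K) (k : Fin N) (x P : Vec N) :
    |∫ y in (0:ℝ)..1, latHam A b f k x y (P k)| ≤ K * (1 + ‖P‖) := by
  have h := norm_integral_le_of_norm_le_const
    (f := fun y => latHam A b f k x y (P k)) (a := 0) (b := 1) (C := K * (1 + ‖P‖))
    (fun t _ => abs_latHam_le' hbf hK0 k x P t)
  simpa using h

theorem abs_Rsol_le (hN : 1 ≤ N) (hbf : latDataCond A b f K L) (hK0 : 0 ≤ K)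
    (hμ : ∀ k, 0 < μ k) (hγ : ∀ k, 0 < γ k) (x P : Vec N) (X : Mat N) :
    |Rsol A b f μ γ x P X| ≤ cRb μ γ K * (1 + ‖P‖ + matNorm X) := by
  have hγsum : (0:ℝ) < ∑ j, γ j :=
    Finset.sum_pos (fun j _ => hγ j) ⟨⟨0, hN⟩, Finset.mem_univ _⟩
  set E := 1 + ‖P‖ + matNorm X with hE
  have hmX : matNorm X ≤ E := by
    have := norm_nonneg P; simp only [hE]; linarith
  have hP1 : 1 + ‖P‖ ≤ E := by
    have := matNorm_nonneg X; simp only [hE]; linarith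
  have hnum : |∑ k, γ k * (μ k * X k k - ∫ y in (0:ℝ)..1, latHam A b f k x y (P k))|
      ≤ (∑ j, γ j * (μ j + K)) * E := by
    rw [Finset.sum_mul]
    refine le_trans (Finset.abs_sum_le_sum_abs _ _) (Finset.sum_le_sum fun j _ => ?_)
    have h1 : |X j j| ≤ E := le_trans (abs_diag_le_matNorm X j) hmX
    have h2 : |∫ y in (0:ℝ)..1, latHam A b f j x y (P j)| ≤ K * E := by
      refine le_trans (abs_intH_le hbf hK0 j x P) ?_
      nlinarith [norm_nonneg P, matNorm_nonneg X]
    rw [abs_mul, abs_of_pos (hγ j)]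
    have h3 : |μ j * X j j - ∫ y in (0:ℝ)..1, latHam A b f j x y (P j)|
        ≤ μ j * E + K * E := by
      refine le_trans (abs_sub _ _) ?_
      rw [abs_mul, abs_of_pos (hμ j)]
      have := mul_le_mul_of_nonneg_left h1 (le_of_lt (hμ j))
      linarith
    calc γ j * |μ j * X j j - ∫ y in (0:ℝ)..1, latHam A b f j x y (P j)|
        ≤ γ j * (μ j * E + K * E) :=
          mul_le_mul_of_nonneg_left h3 (le_of_lt (hγ j))
      _ = γ j * (μ j + K) * E := by ring
  rw [Rsol, cRb, abs_div, abs_of_pos hγsum, div_mul_eq_mul_div]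
  exact (div_le_div_iff_of_pos_right hγsum).2 hnum

theorem abs_qsol_le (hN : 1 ≤ N) (hbf : latDataCond A b f K L) (hK0 : 0 ≤ K)
    (hμ : ∀ k, 0 < μ k) (hγ : ∀ k, 0 < γ k) (x P : Vec N) (X : Mat N) (k : Fin N)
    {y : ℝ} (hy : y ∈ Icc (0:ℝ) 1) :
    |qsol A b f μ γ x P X k y| ≤ (1 + ‖P‖ + matNorm X) * BB μ γ K k := by
  set E := 1 + ‖P‖ + matNorm X with hE
  have hE0 : 0 ≤ E := by
    have := norm_nonneg P; have := matNorm_nonneg X; simp only [hE]; linarith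
  have hH : |latHam A b f k x y (P k)| ≤ K * E := by
    refine le_trans (abs_latHam_le' hbf hK0 k x P y) ?_
    nlinarith [norm_nonneg P, matNorm_nonneg X]
  have hR : |Rsol A b f μ γ x P X| ≤ cRb μ γ K * E := abs_Rsol_le hN hbf hK0 hμ hγ x P X
  have hX : |X k k| ≤ E := by
    refine le_trans (abs_diag_le_matNorm X k) ?_
    have := norm_nonneg P; simp only [hE]; linarith
  have h1 : |qsol A b f μ γ x P X k y|
      ≤ |(latHam A b f k x y (P k) + Rsol A b f μ γ x P X) / μ k| + |X k k| := abs_sub _ _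
  have h2 : |(latHam A b f k x y (P k) + Rsol A b f μ γ x P X) / μ k|
      ≤ ((K + cRb μ γ K) * E) / μ k := by
    rw [abs_div, abs_of_pos (hμ k)]
    refine (div_le_div_iff_of_pos_right (hμ k)).2 ?_
    refine le_trans (abs_add_le _ _) ?_
    have : K * E + cRb μ γ K * E = (K + cRb μ γ K) * E := by ring
    linarith
  calc |qsol A b f μ γ x P X k y|
      ≤ ((K + cRb μ γ K) * E) / μ k + E := by linarith
    _ = E * BB μ γ K k := by rw [BB]; ring

theorem abs_qsol_sub_y (hbf : latDataCond A b f K L) (hL0 : 0 ≤ L) (hμ : ∀ k, 0 < μ k)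
    (x P : Vec N) (X : Mat N) (k : Fin N) (y z : ℝ) :
    |qsol A b f μ γ x P X k y - qsol A b f μ γ x P X k z|
      ≤ (1 + ‖P‖ + matNorm X) * (L / μ k) * |y - z| := by
  have hq : qsol A b f μ γ x P X k y - qsol A b f μ γ x P X k z
      = (latHam A b f k x y (P k) - latHam A b f k x z (P k)) / μ k := by
    rw [qsol, qsol]; ring
  rw [hq, abs_div, abs_of_pos (hμ k)]
  have h := abs_latHam_sub_le hbf k x x y z (P k) (P k)
  simp only [sub_self, abs_zero, norm_zero, mul_zero, zero_add] at h
  have h2 : |latHam A b f k x y (P k) - latHam A b f k x z (P k)|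
      ≤ (1 + ‖P‖ + matNorm X) * L * |y - z| := by
    refine le_trans h ?_
    have hPk := abs_apply_le_norm P k
    have hmX := matNorm_nonneg X
    have hu : 0 ≤ L * |y - z| := by positivity
    nlinarith
  calc |latHam A b f k x y (P k) - latHam A b f k x z (P k)| / μ k
      ≤ ((1 + ‖P‖ + matNorm X) * L * |y - z|) / μ k := (div_le_div_iff_of_pos_right (hμ k)).2 h2
    _ = (1 + ‖P‖ + matNorm X) * (L / μ k) * |y - z| := by ring

theorem abs_latHam_sub_min (hbf : latDataCond A b f K L) (hK0 : 0 ≤ K) (hL0 : 0 ≤ L)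
    (k : Fin N) (x₁ x₂ P₁ P₂ : Vec N) (y : ℝ) :
    |latHam A b f k x₁ y (P₁ k) - latHam A b f k x₂ y (P₂ k)|
      ≤ K * ‖P₁ - P₂‖ + L * ‖x₁ - x₂‖ * (1 + min ‖P₁‖ ‖P₂‖) := by
  have hp : |P₁ k - P₂ k| ≤ ‖P₁ - P₂‖ := by
    have := abs_apply_le_norm (P₁ - P₂) k
    simpa using this
  rcases le_total ‖P₁‖ ‖P₂‖ with hle | hle
  · rw [min_eq_left hle, abs_sub_comm]
    have h := abs_latHam_sub_le hbf k x₂ x₁ y y (P₂ k) (P₁ k)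
    simp only [sub_self, abs_zero, add_zero] at h
    rw [norm_sub_rev x₂ x₁, abs_sub_comm (P₂ k) (P₁ k)] at h
    have e1 : K * |P₁ k - P₂ k| ≤ K * ‖P₁ - P₂‖ := mul_le_mul_of_nonneg_left hp hK0
    have e2 : L * ‖x₁ - x₂‖ * |P₁ k| ≤ L * ‖x₁ - x₂‖ * ‖P₁‖ :=
      mul_le_mul_of_nonneg_left (abs_apply_le_norm P₁ k)
        (mul_nonneg hL0 (norm_nonneg _))
    nlinarith [h]
  · rw [min_eq_right hle]
    have h := abs_latHam_sub_le hbf k x₁ x₂ y y (P₁ k) (P₂ k)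
    simp only [sub_self, abs_zero, add_zero] at h
    have e1 : K * |P₁ k - P₂ k| ≤ K * ‖P₁ - P₂‖ := mul_le_mul_of_nonneg_left hp hK0
    have e2 : L * ‖x₁ - x₂‖ * |P₂ k| ≤ L * ‖x₁ - x₂‖ * ‖P₂‖ :=
      mul_le_mul_of_nonneg_left (abs_apply_le_norm P₂ k)
        (mul_nonneg hL0 (norm_nonneg _))
    nlinarith [h]

theorem abs_intH_sub_le (hbf : latDataCond A b f K L) (hK0 : 0 ≤ K) (hL0 : 0 ≤ L)
    (k : Fin N) (x₁ x₂ P₁ P₂ : Vec N) :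
    |(∫ y in (0:ℝ)..1, latHam A b f k x₁ y (P₁ k))
        - ∫ y in (0:ℝ)..1, latHam A b f k x₂ y (P₂ k)|
      ≤ K * ‖P₁ - P₂‖ + L * ‖x₁ - x₂‖ * (1 + min ‖P₁‖ ‖P₂‖) := by
  rw [← integral_sub ((continuous_latHam_y hbf k x₁ (P₁ k)).intervalIntegrable _ _)
    ((continuous_latHam_y hbf k x₂ (P₂ k)).intervalIntegrable _ _)]
  have h := norm_integral_le_of_norm_le_const (a := (0:ℝ)) (b := 1)
    (f := fun y => latHam A b f k x₁ y (P₁ k) - latHam A b f k x₂ y (P₂ k))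
    (C := K * ‖P₁ - P₂‖ + L * ‖x₁ - x₂‖ * (1 + min ‖P₁‖ ‖P₂‖))
    (fun t _ => abs_latHam_sub_min hbf hK0 hL0 k x₁ x₂ P₁ P₂ t)
  simpa using h

theorem abs_Rsol_sub_le (hN : 1 ≤ N) (hbf : latDataCond A b f K L) (hK0 : 0 ≤ K)
    (hL0 : 0 ≤ L) (hμ : ∀ k, 0 < μ k) (hγ : ∀ k, 0 < γ k)
    (x₁ P₁ : Vec N) (X₁ : Mat N) (x₂ P₂ : Vec N) (X₂ : Mat N) :
    |Rsol A b f μ γ x₁ P₁ X₁ - Rsol A b f μ γ x₂ P₂ X₂|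
      ≤ cRb μ γ K * (‖P₁ - P₂‖ + matNorm (X₁ - X₂))
        + L * (‖x₁ - x₂‖ * (1 + min ‖P₁‖ ‖P₂‖)) := by
  have hγsum : (0:ℝ) < ∑ j, γ j :=
    Finset.sum_pos (fun j _ => hγ j) ⟨⟨0, hN⟩, Finset.mem_univ _⟩
  set Dp := ‖P₁ - P₂‖ with hDp
  set Dx := matNorm (X₁ - X₂) with hDx
  set u := ‖x₁ - x₂‖ * (1 + min ‖P₁‖ ‖P₂‖) with hu
  have hDp0 : 0 ≤ Dp := norm_nonneg _
  have hDx0 : 0 ≤ Dx := matNorm_nonneg _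
  have hdiff : Rsol A b f μ γ x₁ P₁ X₁ - Rsol A b f μ γ x₂ P₂ X₂
      = (∑ k, γ k * (μ k * (X₁ k k - X₂ k k)
          - ((∫ y in (0:ℝ)..1, latHam A b f k x₁ y (P₁ k))
            - ∫ y in (0:ℝ)..1, latHam A b f k x₂ y (P₂ k)))) / ∑ j, γ j := by
    rw [Rsol, Rsol, div_sub_div_same, ← Finset.sum_sub_distrib]
    congr 1
    exact Finset.sum_congr rfl fun k _ => by ring
  have hnum : |∑ k, γ k * (μ k * (X₁ k k - X₂ k k)
        - ((∫ y in (0:ℝ)..1, latHam A b f k x₁ y (P₁ k))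
          - ∫ y in (0:ℝ)..1, latHam A b f k x₂ y (P₂ k)))|
      ≤ (∑ j, γ j * (μ j + K)) * (Dp + Dx) + (∑ j, γ j) * (L * u) := by
    have hterm : ∀ j : Fin N, |γ j * (μ j * (X₁ j j - X₂ j j)
          - ((∫ y in (0:ℝ)..1, latHam A b f j x₁ y (P₁ j))
            - ∫ y in (0:ℝ)..1, latHam A b f j x₂ y (P₂ j)))|
        ≤ γ j * (μ j + K) * (Dp + Dx) + γ j * (L * u) := by
      intro j
      have hX : |X₁ j j - X₂ j j| ≤ Dx := by
        have := abs_diag_le_matNorm (X₁ - X₂) j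
        simpa [Matrix.sub_apply] using this
      have hI := abs_intH_sub_le hbf hK0 hL0 j x₁ x₂ P₁ P₂
      rw [abs_mul, abs_of_pos (hγ j)]
      have habs : |μ j * (X₁ j j - X₂ j j)
            - ((∫ y in (0:ℝ)..1, latHam A b f j x₁ y (P₁ j))
              - ∫ y in (0:ℝ)..1, latHam A b f j x₂ y (P₂ j))|
          ≤ (μ j + K) * (Dp + Dx) + L * u := by
        refine le_trans (abs_sub _ _) ?_
        rw [abs_mul, abs_of_pos (hμ j)]
        have e1 : μ j * |X₁ j j - X₂ j j| ≤ μ j * Dx :=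
          mul_le_mul_of_nonneg_left hX (le_of_lt (hμ j))
        have e2 : μ j * Dx + K * Dp ≤ (μ j + K) * (Dp + Dx) := by nlinarith [hμ j]
        have hI' : |(∫ y in (0:ℝ)..1, latHam A b f j x₁ y (P₁ j))
              - ∫ y in (0:ℝ)..1, latHam A b f j x₂ y (P₂ j)|
            ≤ K * Dp + L * u := by
          refine le_trans hI (le_of_eq ?_)
          rw [hDp, hu]; ring
        linarith
      calc γ j * |μ j * (X₁ j j - X₂ j j)
            - ((∫ y in (0:ℝ)..1, latHam A b f j x₁ y (P₁ j))
              - ∫ y in (0:ℝ)..1, latHam A b f j x₂ y (P₂ j))|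
          ≤ γ j * ((μ j + K) * (Dp + Dx) + L * u) :=
            mul_le_mul_of_nonneg_left habs (le_of_lt (hγ j))
        _ = γ j * (μ j + K) * (Dp + Dx) + γ j * (L * u) := by ring
    refine le_trans (Finset.abs_sum_le_sum_abs _ _) ?_
    rw [Finset.sum_mul, Finset.sum_mul]
    rw [← Finset.sum_add_distrib]
    refine Finset.sum_le_sum fun j _ => ?_
    exact hterm j
  rw [hdiff, abs_div, abs_of_pos hγsum]
  have heq : ((∑ j, γ j * (μ j + K)) * (Dp + Dx) + (∑ j, γ j) * (L * u)) / (∑ j, γ j)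
      = cRb μ γ K * (Dp + Dx) + L * u := by
    rw [cRb]; field_simp
  rw [← heq]
  exact (div_le_div_iff_of_pos_right hγsum).2 hnum

theorem abs_qsol_sub (hN : 1 ≤ N) (hbf : latDataCond A b f K L) (hK0 : 0 ≤ K)
    (hL0 : 0 ≤ L) (hμ : ∀ k, 0 < μ k) (hγ : ∀ k, 0 < γ k)
    (x₁ P₁ : Vec N) (X₁ : Mat N) (x₂ P₂ : Vec N) (X₂ : Mat N) (k : Fin N) (y : ℝ) :
    |qsol A b f μ γ x₁ P₁ X₁ k y - qsol A b f μ γ x₂ P₂ X₂ k y|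
      ≤ (‖P₁ - P₂‖ + matNorm (X₁ - X₂)) * BB μ γ K k
        + (‖x₁ - x₂‖ * (1 + min ‖P₁‖ ‖P₂‖ + min (matNorm X₁) (matNorm X₂))) * DL μ L k := by
  have hγsum : (0:ℝ) < ∑ j, γ j :=
    Finset.sum_pos (fun j _ => hγ j) ⟨⟨0, hN⟩, Finset.mem_univ _⟩
  set Dp := ‖P₁ - P₂‖ with hDp
  set Dx := matNorm (X₁ - X₂) with hDx
  set D := Dp + Dx with hD
  set u := ‖x₁ - x₂‖ * (1 + min ‖P₁‖ ‖P₂‖) with hu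
  set E := ‖x₁ - x₂‖ * (1 + min ‖P₁‖ ‖P₂‖ + min (matNorm X₁) (matNorm X₂)) with hE
  have hDp0 : 0 ≤ Dp := norm_nonneg _
  have hDx0 : 0 ≤ Dx := matNorm_nonneg _
  have hu0 : 0 ≤ u := by
    apply mul_nonneg (norm_nonneg _)
    have h1 : (0:ℝ) ≤ min ‖P₁‖ ‖P₂‖ := le_min (norm_nonneg _) (norm_nonneg _)
    linarith
  have huE : u ≤ E := by
    rw [hu, hE]
    apply mul_le_mul_of_nonneg_left _ (norm_nonneg _)
    have h1 : (0:ℝ) ≤ min (matNorm X₁) (matNorm X₂) :=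
      le_min (matNorm_nonneg _) (matNorm_nonneg _)
    linarith
  have hE0 : 0 ≤ E := le_trans hu0 huE
  have hcRb0 : 0 ≤ cRb μ γ K := by
    rw [cRb]
    apply div_nonneg _ (le_of_lt hγsum)
    apply Finset.sum_nonneg fun j _ => ?_
    have := hμ j; have := hγ j; nlinarith
  have e1 := abs_latHam_sub_min hbf hK0 hL0 k x₁ x₂ P₁ P₂ y
  have e2 := abs_Rsol_sub_le hN hbf hK0 hL0 hμ hγ x₁ P₁ X₁ x₂ P₂ X₂
  have e3 : |X₁ k k - X₂ k k| ≤ Dx := by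
    have := abs_diag_le_matNorm (X₁ - X₂) k
    simpa [Matrix.sub_apply] using this
  have hshape : qsol A b f μ γ x₁ P₁ X₁ k y - qsol A b f μ γ x₂ P₂ X₂ k y
      = ((latHam A b f k x₁ y (P₁ k) - latHam A b f k x₂ y (P₂ k))
          + (Rsol A b f μ γ x₁ P₁ X₁ - Rsol A b f μ γ x₂ P₂ X₂)) / μ k
        - (X₁ k k - X₂ k k) := by
    rw [qsol, qsol]; ring
  rw [hshape]
  refine le_trans (abs_sub _ _) ?_
  rw [abs_div, abs_of_pos (hμ k)]
  have hnum : |latHam A b f k x₁ y (P₁ k) - latHam A b f k x₂ y (P₂ k)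
        + (Rsol A b f μ γ x₁ P₁ X₁ - Rsol A b f μ γ x₂ P₂ X₂)|
      ≤ (K + cRb μ γ K) * D + 2 * L * E := by
    refine le_trans (abs_add_le _ _) ?_
    have l1 : K * Dp ≤ K * D := by nlinarith
    have l2 : L * ‖x₁ - x₂‖ * (1 + min ‖P₁‖ ‖P₂‖) = L * u := by rw [hu]; ring
    have l3 : cRb μ γ K * D + L * u ≤ cRb μ γ K * D + L * E := by
      have := mul_le_mul_of_nonneg_left huE hL0
      linarith
    nlinarith [mul_le_mul_of_nonneg_left huE hL0]
  have hdiv : |latHam A b f k x₁ y (P₁ k) - latHam A b f k x₂ y (P₂ k)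
        + (Rsol A b f μ γ x₁ P₁ X₁ - Rsol A b f μ γ x₂ P₂ X₂)| / μ k
      ≤ ((K + cRb μ γ K) * D + 2 * L * E) / μ k :=
    (div_le_div_iff_of_pos_right (hμ k)).2 hnum
  have hfin : ((K + cRb μ γ K) * D + 2 * L * E) / μ k + Dx
      ≤ D * BB μ γ K k + E * DL μ L k := by
    rw [BB, DL]
    have : ((K + cRb μ γ K) * D + 2 * L * E) / μ k
        = D * ((K + cRb μ γ K) / μ k) + E * (2 * L / μ k) := by
      field_simp
    rw [this]
    have hDxD : Dx ≤ D := by rw [hD]; linarith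
    nlinarith
  linarith

end Bounds

end CorrAux

open CorrAux in
/-- Lemma 5.1, corrector estimates. For every `(x,P,X)` there exists a
unique solution `(v,ρ)` of the cell problem normalized by `⟨v⟩ = 0`; denote it
`v(·;x,P,X)`. There exist constants `C̄₁, C̄₂` and `θ ∈ (0,1]`, independent of `(x,P,X)`,
such that `‖v(·;x,P,X)‖_{C^{2,θ}} ≤ C̄₁ (1 + |P| + |X|)` and
`‖v(·;x₁,P₁,X₁) - v(·;x₂,P₂,X₂)‖_{L∞} ≤ C̄₂ (|P₁-P₂| + |X₁-X₂|)
+ C̄₁ |x₁-x₂| (1 + min(|P₁|,|P₂|) + min(|X₁|,|X₂|))`. -/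
theorem corrector_estimates
    {N : ℕ} (hN : 1 ≤ N)
    (μ γ : Fin N → ℝ) (hμ : ∀ k, 0 < μ k) (hγ : ∀ k, 0 < γ k)
    (hnorm : 2 * ∑ k, γ k * μ k = 1)
    (A : Type) [MetricSpace A] [CompactSpace A] [Nonempty A]
    (b f : Fin N → Vec N → ℝ → A → ℝ) (K L : ℝ) (hbf : latDataCond A b f K L) :
    ∃ (V : Vec N → Vec N → Mat N → Fin N → ℝ → ℝ) (R : Vec N → Vec N → Mat N → ℝ),
      (∀ (x P : Vec N) (X : Mat N), X.IsSymm →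
        IsCellSol μ γ (latHam A b f) x P X (V x P X) (R x P X) ∧
        cellAvg (V x P X) = 0 ∧
        (∀ (v : Fin N → ℝ → ℝ) (ρ : ℝ),
          IsCellSol μ γ (latHam A b f) x P X v ρ → cellAvg v = 0 →
          ρ = R x P X ∧ ∀ k, EqOn (v k) (V x P X k) (Icc 0 1))) ∧
      ∃ (C₁ C₂ θ : ℝ), θ ∈ Ioc (0:ℝ) 1 ∧
        (∀ (x P : Vec N) (X : Mat N), X.IsSymm →
          cellC2θnorm θ (V x P X) ≤ C₁ * (1 + ‖P‖ + matNorm X)) ∧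
        (∀ (x₁ P₁ : Vec N) (X₁ : Mat N) (x₂ P₂ : Vec N) (X₂ : Mat N),
          X₁.IsSymm → X₂.IsSymm →
          ∀ k, ∀ y ∈ Icc (0:ℝ) 1,
            |V x₁ P₁ X₁ k y - V x₂ P₂ X₂ k y| ≤
              C₂ * (‖P₁ - P₂‖ + matNorm (X₁ - X₂)) +
              C₁ * ‖x₁ - x₂‖ *
                (1 + min ‖P₁‖ ‖P₂‖ + min (matNorm X₁) (matNorm X₂))) := by
    classical
  haveI : Nonempty (Fin N) := ⟨⟨0, hN⟩⟩
  have k0 : Fin N := ⟨0, hN⟩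
  have hK0 : 0 ≤ K :=
    le_trans (abs_nonneg _) (((hbf ⟨0, hN⟩).2.2.1 0 0 (Classical.arbitrary A)).1)
  have hL0 : 0 ≤ L := by
    have h := (((hbf ⟨0, hN⟩).2.2.2 0 0 0 1 (Classical.arbitrary A))).1
    have h0 := abs_nonneg (b ⟨0, hN⟩ 0 0 (Classical.arbitrary A)
      - b ⟨0, hN⟩ 0 1 (Classical.arbitrary A))
    simp only [sub_self, norm_zero, zero_add] at h
    have : |(0:ℝ) - 1| = 1 := by norm_num
    rw [this, mul_one] at h
    linarith
  have hγsum : (0:ℝ) < ∑ j, γ j :=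
    Finset.sum_pos (fun j _ => hγ j) ⟨⟨0, hN⟩, Finset.mem_univ _⟩
  have hcRb0 : 0 ≤ cRb μ γ K := by
    rw [cRb]
    refine div_nonneg (Finset.sum_nonneg fun j _ => ?_) (le_of_lt hγsum)
    exact mul_nonneg (hγ j).le (by have := (hμ j).le; linarith)
  have hBB0 : ∀ k, 0 ≤ BB μ γ K k := by
    intro k
    rw [BB]
    have h1 : 0 ≤ (K + cRb μ γ K) / μ k := div_nonneg (by linarith) (le_of_lt (hμ k))
    linarith
  have hDL0 : ∀ k, 0 ≤ DL μ L k := fun k =>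
    div_nonneg (by linarith) (le_of_lt (hμ k))
  refine ⟨Vsol A b f μ γ, Rsol A b f μ γ, ?_, ?_⟩
  · intro x P X _hsym
    exact ⟨isCellSol_Vsol hN hbf hμ hγ x P X, cellAvg_Vsol hN hbf x P X,
      fun v ρ hsol havg => cellSol_unique hN hbf hμ hγ x P X v ρ hsol havg⟩
  set C1a := (∑ k, 5 * BB μ γ K k) + (N:ℝ) * (∑ j, (3/2) * BB μ γ K j) + ∑ j, L / μ j
    with hC1a
  set Cx := ∑ j, (7/2) * DL μ L j with hCx
  set C2 := ∑ j, (7/2) * BB μ γ K j with hC2d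
  have hC1a0 : 0 ≤ C1a := by
    rw [hC1a]
    have s1 : 0 ≤ ∑ k, 5 * BB μ γ K k :=
      Finset.sum_nonneg fun k _ => by have := hBB0 k; linarith
    have s2 : 0 ≤ ∑ j, (3/2) * BB μ γ K j :=
      Finset.sum_nonneg fun j _ => by have := hBB0 j; linarith
    have s3 : 0 ≤ ∑ j, L / μ j :=
      Finset.sum_nonneg fun j _ => div_nonneg hL0 (le_of_lt (hμ j))
    have : (0:ℝ) ≤ (N:ℝ) := Nat.cast_nonneg N
    positivity
  have hCx0 : 0 ≤ Cx := Finset.sum_nonneg fun j _ => by have := hDL0 j; linarith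
  refine ⟨C1a + Cx, C2, 1, ⟨one_pos, le_rfl⟩, ?_, ?_⟩
  · -- C^{2,1} estimate
    intro x P X _hsym
    simp only [Vsol]
    set Q := qsol A b f μ γ x P X with hQdef
    have hQ : ∀ k, Continuous (Q k) := continuous_qsol hbf x P X
    set E := 1 + ‖P‖ + matNorm X with hE
    have hE0 : 0 ≤ E := by
      have := norm_nonneg P; have := matNorm_nonneg X; rw [hE]; linarith
    have hM : ∀ k, ∀ t ∈ Icc (0:ℝ) 1, |Q k t| ≤ E * BB μ γ K k := fun k t ht =>
      abs_qsol_le hN hbf hK0 hμ hγ x P X k ht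
    have h1 : ∀ k, cellSup (Vq N Q k)
        ≤ 2 * (E * BB μ γ K k) + ∑ j, (3/2) * (E * BB μ γ K j) := fun k =>
      cellSup_le fun y hy => abs_Vq_le hN hQ hM k hy
    have h2 : ∀ k, cellSup (d1I (Vq N Q k)) ≤ 2 * (E * BB μ γ K k) := by
      intro k
      refine cellSup_le fun y hy => ?_
      rw [d1I_Vq hQ k hy]
      have haq : |aq (Q k)| ≤ E * BB μ γ K k := by
        rw [aq, abs_neg]
        exact abs_Wq_le (hQ k) (hM k) (by norm_num)
      have hG : |Gq (Q k) y| ≤ E * BB μ γ K k := abs_Gq_le (hM k) hy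
      calc |aq (Q k) + Gq (Q k) y| ≤ |aq (Q k)| + |Gq (Q k) y| := abs_add_le _ _
        _ ≤ 2 * (E * BB μ γ K k) := by linarith
    have h3 : ∀ k, cellSup (d2I (Vq N Q k)) ≤ E * BB μ γ K k := by
      intro k
      refine cellSup_le fun y hy => ?_
      rw [d2I_Vq hQ k hy]
      exact hM k y hy
    have h4 : ∀ k, cellHolder 1 (d2I (Vq N Q k)) ≤ E * (L / μ k) := by
      intro k
      refine cellHolder_one_le
        (mul_nonneg hE0 (div_nonneg hL0 (le_of_lt (hμ k)))) fun y hy z hz => ?_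
      rw [d2I_Vq hQ k hy, d2I_Vq hQ k hz]
      exact abs_qsol_sub_y hbf hL0 hμ x P X k y z
    have hsup : (⨆ k, cellHolder 1 (d2I (Vq N Q k))) ≤ E * ∑ j, L / μ j := by
      refine ciSup_le fun k => le_trans (h4 k) ?_
      refine mul_le_mul_of_nonneg_left ?_ hE0
      exact Finset.single_le_sum (fun j _ => div_nonneg hL0 (le_of_lt (hμ j)))
        (Finset.mem_univ k)
    have hS' : (∑ j, (3/2) * (E * BB μ γ K j)) = E * ∑ j, (3/2) * BB μ γ K j := by
      rw [Finset.mul_sum]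
      exact Finset.sum_congr rfl fun j _ => by ring
    have hterm : ∀ k, cellSup (Vq N Q k) + cellSup (d1I (Vq N Q k))
          + cellSup (d2I (Vq N Q k))
        ≤ E * (5 * BB μ γ K k) + E * ∑ j, (3/2) * BB μ γ K j := by
      intro k
      have e1 := h1 k; have e2 := h2 k; have e3 := h3 k
      calc cellSup (Vq N Q k) + cellSup (d1I (Vq N Q k)) + cellSup (d2I (Vq N Q k))
          ≤ (2 * (E * BB μ γ K k) + ∑ j, (3/2) * (E * BB μ γ K j))
            + 2 * (E * BB μ γ K k) + E * BB μ γ K k :=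
            add_le_add (add_le_add e1 e2) e3
        _ = E * (5 * BB μ γ K k) + (∑ j, (3/2) * (E * BB μ γ K j)) := by ring
        _ = E * (5 * BB μ γ K k) + E * ∑ j, (3/2) * BB μ γ K j := by rw [hS']
    calc cellC2θnorm 1 (Vq N Q)
        = (∑ k, (cellSup (Vq N Q k) + cellSup (d1I (Vq N Q k))
            + cellSup (d2I (Vq N Q k)))) + ⨆ k, cellHolder 1 (d2I (Vq N Q k)) := rfl
      _ ≤ (∑ k, (E * (5 * BB μ γ K k) + E * ∑ j, (3/2) * BB μ γ K j))
            + E * ∑ j, L / μ j :=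
          add_le_add (Finset.sum_le_sum fun k _ => hterm k) hsup
      _ = C1a * E := by
          rw [Finset.sum_add_distrib, Finset.sum_const, Finset.card_univ,
            Fintype.card_fin, nsmul_eq_mul, hC1a]
          have : (∑ k, E * (5 * BB μ γ K k)) = E * ∑ k, 5 * BB μ γ K k := by
            rw [Finset.mul_sum]
          rw [this]; ring
      _ ≤ (C1a + Cx) * E := mul_le_mul_of_nonneg_right (by linarith) hE0
  · -- Lipschitz estimate
    intro x₁ P₁ X₁ x₂ P₂ X₂ _h1 _h2 k y hy
    simp only [Vsol]
    set Q₁ := qsol A b f μ γ x₁ P₁ X₁ with hQ1def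
    set Q₂ := qsol A b f μ γ x₂ P₂ X₂ with hQ2def
    have hQ₁ : ∀ k, Continuous (Q₁ k) := continuous_qsol hbf x₁ P₁ X₁
    have hQ₂ : ∀ k, Continuous (Q₂ k) := continuous_qsol hbf x₂ P₂ X₂
    set D := ‖P₁ - P₂‖ + matNorm (X₁ - X₂) with hD
    set Exm := ‖x₁ - x₂‖ * (1 + min ‖P₁‖ ‖P₂‖ + min (matNorm X₁) (matNorm X₂)) with hExm
    have hD0 : 0 ≤ D := by
      have := norm_nonneg (P₁ - P₂); have := matNorm_nonneg (X₁ - X₂); rw [hD]; linarith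
    have hExm0 : 0 ≤ Exm := by
      rw [hExm]
      apply mul_nonneg (norm_nonneg _)
      have l1 : (0:ℝ) ≤ min ‖P₁‖ ‖P₂‖ := le_min (norm_nonneg _) (norm_nonneg _)
      have l2 : (0:ℝ) ≤ min (matNorm X₁) (matNorm X₂) :=
        le_min (matNorm_nonneg _) (matNorm_nonneg _)
      linarith
    have hM : ∀ j, ∀ t ∈ Icc (0:ℝ) 1, |Q₁ j t - Q₂ j t|
        ≤ D * BB μ γ K j + Exm * DL μ L j := fun j t _ =>
      abs_qsol_sub hN hbf hK0 hL0 hμ hγ x₁ P₁ X₁ x₂ P₂ X₂ j t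
    have hM0 : ∀ j, 0 ≤ D * BB μ γ K j + Exm * DL μ L j := fun j =>
      add_nonneg (mul_nonneg hD0 (hBB0 j)) (mul_nonneg hExm0 (hDL0 j))
    have hsub : Vq N Q₁ k y - Vq N Q₂ k y = Vq N (fun j t => Q₁ j t - Q₂ j t) k y :=
      (Vq_sub hQ₁ hQ₂ k y).symm
    rw [hsub]
    have hbound := abs_Vq_le hN (fun j => (hQ₁ j).sub (hQ₂ j)) hM k hy
    have hsingle : 2 * (D * BB μ γ K k + Exm * DL μ L k)
        ≤ ∑ j, 2 * (D * BB μ γ K j + Exm * DL μ L j) := by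
      refine Finset.single_le_sum (f := fun j => 2 * (D * BB μ γ K j + Exm * DL μ L j))
        (fun j _ => ?_) (Finset.mem_univ k)
      show (0:ℝ) ≤ 2 * (D * BB μ γ K j + Exm * DL μ L j)
      have := hM0 j; linarith
    have hsum : (∑ j, 2 * (D * BB μ γ K j + Exm * DL μ L j))
          + (∑ j, (3/2) * (D * BB μ γ K j + Exm * DL μ L j))
        = D * C2 + Exm * Cx := by
      rw [hC2d, hCx, Finset.mul_sum, Finset.mul_sum, ← Finset.sum_add_distrib,
        ← Finset.sum_add_distrib]
      exact Finset.sum_congr rfl fun j _ => by ring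
    have hkey : |Vq N (fun j t => Q₁ j t - Q₂ j t) k y| ≤ D * C2 + Exm * Cx := by
      calc |Vq N (fun j t => Q₁ j t - Q₂ j t) k y|
          ≤ 2 * (D * BB μ γ K k + Exm * DL μ L k)
            + ∑ j, (3/2) * (D * BB μ γ K j + Exm * DL μ L j) := hbound
        _ ≤ (∑ j, 2 * (D * BB μ γ K j + Exm * DL μ L j))
            + ∑ j, (3/2) * (D * BB μ γ K j + Exm * DL μ L j) :=
            add_le_add hsingle le_rfl
        _ = D * C2 + Exm * Cx := hsum
    have heq : (C1a + Cx) * ‖x₁ - x₂‖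
          * (1 + min ‖P₁‖ ‖P₂‖ + min (matNorm X₁) (matNorm X₂))
        = (C1a + Cx) * Exm := by rw [hExm]; ring
    have hfin : D * C2 + Exm * Cx ≤ C2 * D + (C1a + Cx) * Exm := by
      have hpos := mul_nonneg hC1a0 hExm0
      have e : D * C2 + Exm * Cx = C2 * D + Cx * Exm := by ring
      rw [e]
      have e2 : (C1a + Cx) * Exm = C1a * Exm + Cx * Exm := by ring
      rw [e2]
      linarith
    rw [heq]
    linarith
end
end
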